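/- arXiv:1305.5349 — 5 statements merged into one kernel-verified Lean document; each statement's English description precedes it below -/
import Mathlib

section
/- Let k be a field, K/k a field extension, and A a commutative local k-algebra that is finite dimensional as a k-vector space, with maximal ideal m_A. Let m be a maximal ideal of A ⊗_k K and let B be the localization of A ⊗_k K at m (a local Artinian K-algebra, corresponding to a connected component of Spec(A ⊗_k K)). Then length_B(B) = length_A(A) · length_B(B/m_A·B), where m_A·B denotes the ideal of B generated by the image of m_A, so that B/m_A·B is the local factor of (A/m_A) ⊗_k K corresponding to the same connected component. -/
open TensorProduct

/-- The length of a module `M` over a ring `R`: the supremum of the lengths of chains of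
submodules of `M`, i.e. the Krull dimension of the lattice of submodules. -/
noncomputable def moduleLength (R M : Type*) [Ring R] [AddCommGroup M] [Module R M] :
    WithBot ℕ∞ :=
  Order.krullDim (Submodule R M)

section LatticeAux
open Order
section Lattice
variable {L : Type*} [Lattice L] [IsModularLattice L] (a : L)

lemma krullDim_Iic_add_Ici :
    krullDim L = krullDim {x : L // x ≤ a} + krullDim {x : L // a ≤ x} := by
  have hIic : Nonempty {x : L // x ≤ a} := ⟨⟨a, le_rfl⟩⟩
  have hIci : Nonempty {x : L // a ≤ x} := ⟨⟨a, le_rfl⟩⟩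
  have hL : Nonempty L := ⟨a⟩
  apply le_antisymm
  · -- every chain in L has length ≤ sum of heights
    rw [krullDim_eq_iSup_length, krullDim_eq_iSup_height_of_nonempty,
      krullDim_eq_iSup_height_of_nonempty, ← WithBot.coe_add, WithBot.coe_le_coe]
    apply iSup_le
    intro p
    set f : Fin (p.length + 1) → {x : L // x ≤ a} := fun i => ⟨p i ⊓ a, inf_le_right⟩
    set g : Fin (p.length + 1) → {x : L // a ≤ x} := fun i => ⟨p i ⊔ a, le_sup_right⟩
    have key : ∀ i : Fin (p.length + 1),
        (i : ℕ∞) ≤ height (f i) + height (g i) := by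
      intro i
      induction i using Fin.induction with
      | zero => simp
      | succ i ih =>
        have hstep : p i.castSucc < p i.succ := p.step i
        have hmono_f : f i.castSucc ≤ f i.succ := by
          simp only [f, Subtype.mk_le_mk]
          exact inf_le_inf_right a hstep.le
        have hmono_g : g i.castSucc ≤ g i.succ := by
          simp only [g, Subtype.mk_le_mk]
          exact sup_le_sup_right hstep.le a
        have : f i.castSucc < f i.succ ∨ g i.castSucc < g i.succ := by
          by_cases hinf : p i.succ ⊓ a ≤ p i.castSucc ⊓ a
          · right
            exact Subtype.mk_lt_mk.mpr (sup_lt_sup_of_lt_of_inf_le_inf hstep hinf)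
          · left
            exact Subtype.mk_lt_mk.mpr (lt_of_le_not_ge hmono_f
              (fun h => hinf (by simpa [f] using h)))
        have hsucc : ((i.succ : Fin (p.length + 1)) : ℕ∞) = (i : ℕ∞) + 1 := by
          push_cast [Fin.val_succ]
          ring
        rw [hsucc]
        rcases this with hf | hg
        · rcases eq_or_ne (height (f i.castSucc)) ⊤ with htop | htop
          · have : (⊤ : ℕ∞) ≤ height (f i.succ) := htop ▸ height_mono hf.le
            calc ((i : ℕ∞) + 1) ≤ ⊤ := le_top
            _ ≤ height (f i.succ) + height (g i.succ) := le_add_right this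
          · have h1 : height (f i.castSucc) + 1 ≤ height (f i.succ) :=
              (ENat.add_one_le_iff htop).mpr (height_strictMono hf htop.lt_top)
            calc ((i : ℕ∞) + 1) ≤ (height (f i.castSucc) + height (g i.castSucc)) + 1 := by
                  exact add_le_add_left ih 1
              _ = (height (f i.castSucc) + 1) + height (g i.castSucc) := by ring
              _ ≤ height (f i.succ) + height (g i.succ) :=
                  add_le_add h1 (height_mono hmono_g)
        · rcases eq_or_ne (height (g i.castSucc)) ⊤ with htop | htop
          · have : (⊤ : ℕ∞) ≤ height (g i.succ) := htop ▸ height_mono hg.le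
            calc ((i : ℕ∞) + 1) ≤ ⊤ := le_top
            _ ≤ height (f i.succ) + height (g i.succ) := le_add_left this
          · have h1 : height (g i.castSucc) + 1 ≤ height (g i.succ) :=
              (ENat.add_one_le_iff htop).mpr (height_strictMono hg htop.lt_top)
            calc ((i : ℕ∞) + 1) ≤ (height (f i.castSucc) + height (g i.castSucc)) + 1 := by
                  exact add_le_add_left ih 1
              _ = height (f i.castSucc) + (height (g i.castSucc) + 1) := by ring
              _ ≤ height (f i.succ) + height (g i.succ) :=
                  add_le_add (height_mono hmono_f) h1
    have := key (Fin.last p.length)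
    simp only [Fin.val_last] at this
    exact this.trans (add_le_add (le_iSup _ _) (le_iSup _ _))
  · rw [krullDim_eq_iSup_length, krullDim_eq_iSup_length, krullDim_eq_iSup_length,
      ← WithBot.coe_add, WithBot.coe_le_coe]
    apply ENat.iSup_add_iSup_le
    intro p q
    -- build a chain in L from p and q
    have hval : StrictMono (fun x : {x : L // x ≤ a} => (x : L)) := fun _ _ h => h
    have hval' : StrictMono (fun x : {x : L // a ≤ x} => (x : L)) := fun _ _ h => h
    set p' := p.map _ hval
    set q' := q.map _ hval'
    have hle : p'.last ≤ q'.head := le_trans p.last.2 q.head.2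
    rcases eq_or_lt_of_le hle with heq | hlt
    · refine le_trans ?_ (le_iSup (fun r : LTSeries L => (r.length : ℕ∞)) (p'.smash q' heq))
      simp only [RelSeries.smash_length, RelSeries.map_length, p', q']
      push_cast
      exact le_rfl
    · refine le_trans ?_ (le_iSup (fun r : LTSeries L => (r.length : ℕ∞)) (p'.append q' hlt))
      simp only [RelSeries.append_length, RelSeries.map_length, p', q']
      push_cast
      exact le_self_add

end Lattice

section SimpleOrder
variable {α : Type*} [PartialOrder α] [BoundedOrder α]

lemma krullDim_eq_one_of_isSimpleOrder [IsSimpleOrder α] : krullDim α = 1 := by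
  apply le_antisymm
  · rw [krullDim_eq_iSup_length]
    rw [show ((1 : WithBot ℕ∞)) = ((1 : ℕ∞) : WithBot ℕ∞) from rfl, WithBot.coe_le_coe]
    apply iSup_le
    intro p
    rw [show ((1:ℕ∞)) = ((1:ℕ) : ℕ∞) from rfl, Nat.cast_le]
    by_contra h
    push_neg at h
    have h2 : 2 ≤ p.length := h
    have h01 : p ⟨0, by omega⟩ < p ⟨1, by omega⟩ := p.strictMono (by simp [Fin.lt_def])
    have h12 : p ⟨1, by omega⟩ < p ⟨2, by omega⟩ := p.strictMono (by simp [Fin.lt_def])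
    have hb : p ⟨1, by omega⟩ = ⊥ := IsSimpleOrder.eq_bot_of_lt h12
    have ht : p ⟨1, by omega⟩ = ⊤ := IsSimpleOrder.eq_top_of_lt h01
    exact bot_ne_top (hb ▸ ht)
  · have h := LTSeries.length_le_krullDim ((RelSeries.singleton _ (⊥ : α) : LTSeries α).snoc ⊤
      (by simp [bot_lt_top]))
    simpa using h
end SimpleOrder

end LatticeAux

section Aux
open Order
variable {R M N : Type*} [Ring R] [AddCommGroup M] [Module R M] [AddCommGroup N] [Module R N]

lemma moduleLength_congr (e : M ≃ₗ[R] N) : moduleLength R M = moduleLength R N :=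
  krullDim_eq_of_orderIso (Submodule.orderIsoMapComap e)

lemma moduleLength_eq_add (N' : Submodule R M) :
    moduleLength R M = moduleLength R N' + moduleLength R (M ⧸ N') := by
  rw [moduleLength, krullDim_Iic_add_Ici N']
  congr 1
  · exact (krullDim_eq_of_orderIso (Submodule.MapSubtype.orderIso N')).symm
  · exact (krullDim_eq_of_orderIso (Submodule.comapMkQRelIso N')).symm

lemma moduleLength_eq_one [IsSimpleModule R M] : moduleLength R M = 1 :=
  krullDim_eq_one_of_isSimpleOrder

lemma moduleLength_eq_zero [Subsingleton M] : moduleLength R M = 0 := by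
  have : Subsingleton (Submodule R M) := by rwa [Submodule.subsingleton_iff R]
  have : Unique (Submodule R M) := uniqueOfSubsingleton ⊥
  exact krullDim_eq_zero_of_unique

lemma moduleLength_ne_bot : moduleLength R M ≠ ⊥ := by
  have : Nonempty (Submodule R M) := ⟨⊥⟩
  exact ne_bot_of_le_ne_bot (by simp) krullDim_nonneg

end Aux

section Flat
variable {A B : Type*} [CommRing A] [CommRing B] [Algebra A B] [Module.Flat A B]

lemma flat_colon_mem (I I' : Ideal A) (x : A) (h : ∀ a : A, a * x ∈ I ↔ a ∈ I') (b : B) :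
    algebraMap A B x * b ∈ I.map (algebraMap A B) ↔ b ∈ I'.map (algebraMap A B) := by
  constructor
  · intro hb
    set u : I' →ₗ[A] A := Submodule.subtype (I' : Submodule A A) with hu
    set v : A →ₗ[A] (A ⧸ I) := (Submodule.mkQ (I : Submodule A A)) ∘ₗ
      (LinearMap.toSpanSingleton A A x) with hv
    have hexact : Function.Exact u v := by
      rw [LinearMap.exact_iff, Submodule.range_subtype]
      ext a
      simp only [v, LinearMap.mem_ker, LinearMap.coe_comp, Function.comp_apply,
        LinearMap.toSpanSingleton_apply, Submodule.mkQ_apply, smul_eq_mul,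
        Submodule.Quotient.mk_eq_zero]
      exact h a
    have hfl := Module.Flat.lTensor_exact B hexact
    have h1 : (v.lTensor B) (b ⊗ₜ (1 : A)) = 0 := by
      rw [LinearMap.lTensor_tmul]
      have hv1 : v 1 = Submodule.Quotient.mk x := by
        simp [v, LinearMap.toSpanSingleton_apply]
      rw [hv1]
      apply (tensorQuotEquivQuotSMul B I).injective
      rw [map_zero]
      have := tensorQuotEquivQuotSMul_tmul_mk (M := B) I b x
      rw [show (Ideal.Quotient.mk I x) = Submodule.Quotient.mk x from rfl] at this
      rw [this, Submodule.Quotient.mk_eq_zero, Ideal.smul_top_eq_map,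
        Submodule.restrictScalars_mem, Algebra.smul_def]
      exact hb
    obtain ⟨t, ht⟩ := (hfl _).mp h1
    have hmem : ∀ t : B ⊗[A] I',
        (TensorProduct.rid A B) (u.lTensor B t) ∈ I' • (⊤ : Submodule A B) := by
      intro t
      induction t using TensorProduct.induction_on with
      | zero => simp
      | tmul c y =>
        rw [LinearMap.lTensor_tmul]
        simp only [u, Submodule.coe_subtype, TensorProduct.rid_tmul]
        exact Submodule.smul_mem_smul y.2 trivial
      | add s t hs ht' =>
        rw [map_add, map_add]; exact Submodule.add_mem _ hs ht'
    have hb' : b ∈ I' • (⊤ : Submodule A B) := by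
      have h2 := hmem t
      rw [ht] at h2
      simpa using h2
    rwa [Ideal.smul_top_eq_map, Submodule.restrictScalars_mem] at hb'
  · intro hb
    have hb' : b ∈ I' • (⊤ : Submodule A B) := by
      rw [Ideal.smul_top_eq_map, Submodule.restrictScalars_mem]; exact hb
    refine Submodule.smul_induction_on hb' ?_ ?_
    · intro r hr n _
      rw [Algebra.smul_def, ← mul_assoc, ← map_mul, mul_comm x r]
      exact Ideal.mul_mem_right _ _ (Ideal.mem_map_of_mem _ ((h r).mpr hr))
    · intro y z hy hz
      rw [mul_add]; exact Ideal.add_mem _ hy hz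

end Flat


section Key
variable {A B : Type*} [CommRing A] [IsLocalRing A] [IsNoetherian A A] [IsArtinian A A]
    [CommRing B] [Algebra A B] [Module.Flat A B]

lemma key_length (I : Ideal A) :
    moduleLength B (B ⧸ (I.map (algebraMap A B))) =
      moduleLength A (A ⧸ I) *
        moduleLength B (B ⧸ ((IsLocalRing.maximalIdeal A).map (algebraMap A B))) := by
  set mA := IsLocalRing.maximalIdeal A with hmA
  set L := moduleLength B (B ⧸ (mA.map (algebraMap A B))) with hL
  induction I using IsNoetherian.induction with
  | hgt I IH =>
  by_cases hI : I = ⊤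
  · subst hI
    rw [Ideal.map_top]
    haveI e1 : Subsingleton (B ⧸ (⊤ : Ideal B)) :=
      Submodule.Quotient.subsingleton_iff.mpr rfl
    haveI e2 : Subsingleton (A ⧸ (⊤ : Ideal A)) :=
      Submodule.Quotient.subsingleton_iff.mpr rfl
    rw [moduleLength_eq_zero, moduleLength_eq_zero, zero_mul]
  -- find a minimal J strictly above I
  · have hne : {J : Ideal A | I < J}.Nonempty := ⟨⊤, lt_top_iff_ne_top.mpr hI⟩
    obtain ⟨J, hJ, hmin⟩ :=
      (IsWellFounded.wf : WellFounded ((· < ·) : Ideal A → Ideal A → Prop)).has_min _ hne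
    obtain ⟨x, hxJ, hxI⟩ := SetLike.exists_of_lt (show I < J from hJ)
    have hspan : I ⊔ Ideal.span {x} = J := by
      have h1 : I < I ⊔ Ideal.span {x} := by
        refine lt_of_le_of_ne le_sup_left fun e => hxI ?_
        have : x ∈ I ⊔ Ideal.span {x} := Submodule.mem_sup_right (Ideal.subset_span rfl)
        rwa [← e] at this
      have h2 : I ⊔ Ideal.span {x} ≤ J :=
        sup_le hJ.le (Ideal.span_le.mpr (by simpa using hxJ))
      by_contra hne2
      exact hmin _ h1 (h2.lt_of_ne hne2)
    have hcolon : ∀ a : A, a * x ∈ I ↔ a ∈ mA := by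
      intro a
      constructor
      · intro ha
        by_contra hamem
        have hu : IsUnit a := IsLocalRing.notMem_maximalIdeal.mp hamem
        obtain ⟨u, hu'⟩ := hu
        apply hxI
        have h3 : (↑u⁻¹ : A) * (a * x) ∈ I := Ideal.mul_mem_left _ _ ha
        rwa [← hu', ← mul_assoc, Units.inv_mul, one_mul] at h3
      · intro ha
        by_contra hax
        have h1 : I < I ⊔ Ideal.span {a * x} := by
          refine lt_of_le_of_ne le_sup_left fun e => hax ?_
          have : a * x ∈ I ⊔ Ideal.span {a * x} := Submodule.mem_sup_right (Ideal.subset_span rfl)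
          rwa [← e] at this
        have h2 : I ⊔ Ideal.span {a * x} ≤ J :=
          sup_le hJ.le (Ideal.span_le.mpr (by
            simp only [Set.singleton_subset_iff, SetLike.mem_coe]
            exact Ideal.mul_mem_left _ _ hxJ))
        have hJeq : I ⊔ Ideal.span {a * x} = J := by
          by_contra hne2; exact hmin _ h1 (h2.lt_of_ne hne2)
        have hxJ' : x ∈ I ⊔ Ideal.span {a * x} := hJeq ▸ hxJ
        rw [Submodule.mem_sup] at hxJ'
        obtain ⟨i, hi, z, hz, hxe⟩ := hxJ'
        rw [Ideal.mem_span_singleton] at hz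
        obtain ⟨c, hc⟩ := hz
        have hunit : IsUnit (1 - a * c) := by
          have hm : a * c ∈ mA := Ideal.mul_mem_right _ _ ha
          exact IsLocalRing.isUnit_one_sub_self_of_mem_nonunits _
            ((IsLocalRing.mem_maximalIdeal _).mp hm)
        apply hxI
        obtain ⟨w, hw⟩ := hunit
        have hxi : (1 - a * c) * x = i := by
          have : x = i + a * x * c := by rw [← hc, hxe]
          linear_combination this
        have h4 : (↑w⁻¹ : A) * ((1 - a * c) * x) ∈ I := hxi ▸ Ideal.mul_mem_left _ _ hi
        rwa [← hw, ← mul_assoc, Units.inv_mul, one_mul] at h4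
    -- the A side
    set NA : Submodule A (A ⧸ I) :=
      Submodule.map (Submodule.mkQ (I : Submodule A A)) (J : Submodule A A) with hNA
    have hNAatom : IsAtom NA := by
      constructor
      · intro hbot
        apply hxI
        have : Submodule.Quotient.mk x ∈ NA := Submodule.mem_map_of_mem hxJ
        rw [hbot, Submodule.mem_bot, Submodule.Quotient.mk_eq_zero] at this
        exact this
      · intro b hb
        set J' : Ideal A := Submodule.comap (Submodule.mkQ (I : Submodule A A)) b with hJ'
        have hIJ' : I ≤ J' := fun y hy => by
          simp only [J', Submodule.mem_comap, Submodule.mkQ_apply]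
          rw [show Submodule.Quotient.mk y = (0 : A ⧸ I) from
            (Submodule.Quotient.mk_eq_zero _).mpr hy]
          exact b.zero_mem
        have hcomapNA : Submodule.comap (Submodule.mkQ (I : Submodule A A)) NA = J := by
          rw [hNA, Submodule.comap_map_mkQ, sup_eq_right.mpr hJ.le]
        have hJ'J : J' < J := by
          rw [← hcomapNA]
          exact Submodule.comap_strictMono_of_surjective (Submodule.mkQ_surjective _) hb
        have hJ'I : J' = I := by
          by_contra hne2
          exact hmin J' (hIJ'.lt_of_ne (Ne.symm hne2)) hJ'J
        have : b = Submodule.map (Submodule.mkQ (I : Submodule A A)) J' :=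
          (Submodule.map_comap_eq_of_surjective (Submodule.mkQ_surjective _) b).symm
        rw [this, hJ'I, Submodule.mkQ_map_self]
    haveI : IsSimpleModule A NA := isSimpleModule_iff_isAtom.mpr hNAatom
    have hA : moduleLength A (A ⧸ I) = 1 + moduleLength A (A ⧸ J) := by
      rw [moduleLength_eq_add NA, moduleLength_eq_one,
        moduleLength_congr (Submodule.quotientQuotientEquivQuotient
          (I : Submodule A A) (J : Submodule A A) hJ.le)]
    -- the B side
    set Ib := Ideal.map (algebraMap A B) I with hIb
    set Jb := J.map (algebraMap A B) with hJb
    set NB : Submodule B (B ⧸ Ib) :=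
      Submodule.map (Submodule.mkQ (Ib : Submodule B B)) (Jb : Submodule B B) with hNB
    have hadd : moduleLength B (B ⧸ Ib) = moduleLength B NB + moduleLength B (B ⧸ Jb) := by
      rw [moduleLength_eq_add NB,
        moduleLength_congr (Submodule.quotientQuotientEquivQuotient
          (Ib : Submodule B B) (Jb : Submodule B B) (Ideal.map_mono hJ.le))]
    set ψ : B →ₗ[B] B ⧸ (Ib : Submodule B B) :=
      (Submodule.mkQ _) ∘ₗ (LinearMap.toSpanSingleton B B (algebraMap A B x)) with hψ
    have hker : LinearMap.ker ψ = ((mA.map (algebraMap A B) : Ideal B) : Submodule B B) := by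
      ext b
      simp only [hψ, LinearMap.mem_ker, LinearMap.coe_comp, Function.comp_apply,
        LinearMap.toSpanSingleton_apply, Submodule.mkQ_apply, Submodule.Quotient.mk_eq_zero,
        smul_eq_mul]
      rw [mul_comm]
      exact flat_colon_mem I mA x hcolon b
    have hrange : LinearMap.range ψ = NB := by
      rw [hψ, LinearMap.range_comp, ← LinearMap.span_singleton_eq_range]
      have hJbeq : Jb = Ib ⊔ Ideal.span {algebraMap A B x} := by
        rw [hJb, ← hspan, Ideal.map_sup, Ideal.map_span, Set.image_singleton]
      have : NB = Submodule.map (Submodule.mkQ (Ib : Submodule B B))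
          (Ib ⊔ Ideal.span {algebraMap A B x} : Ideal B) := by rw [hNB, ← hJbeq]
      rw [this]
      rw [show ((Ib ⊔ Ideal.span {algebraMap A B x} : Ideal B) : Submodule B B)
        = (Ib : Submodule B B) ⊔ (Ideal.span {algebraMap A B x} : Submodule B B) from rfl,
        Submodule.map_sup, Submodule.mkQ_map_self, bot_sup_eq]
    have hNBlen : moduleLength B NB = L := by
      calc moduleLength B NB = moduleLength B (LinearMap.range ψ) := by rw [hrange]
        _ = moduleLength B (B ⧸ LinearMap.ker ψ) :=
            (moduleLength_congr (LinearMap.quotKerEquivRange ψ)).symm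
        _ = L := by rw [hker]
    have IHJ := IH J hJ
    rw [hadd, hNBlen, hA, IHJ]
    obtain ⟨l, hl⟩ := WithBot.ne_bot_iff_exists.mp (moduleLength_ne_bot
      (R := B) (M := B ⧸ (mA.map (algebraMap A B))))
    obtain ⟨c, hc⟩ := WithBot.ne_bot_iff_exists.mp (moduleLength_ne_bot
      (R := A) (M := A ⧸ J))
    rw [hL, ← hl, ← hc, ← WithBot.coe_mul, ← WithBot.coe_one, ← WithBot.coe_add,
      ← WithBot.coe_add, ← WithBot.coe_mul]
    rw [WithBot.coe_inj]
    ring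

end Key


/-- **Lemma A.3**: let `K/k` be a field extension, `A` a finite-dimensional local `k`-algebra,
`m` a maximal ideal of `A ⊗[k] K` and `B` the localization of `A ⊗[k] K` at `m`. Then
`length_B B = length_A A · length_B (B / m_A·B)`. -/
theorem stmt2 (k K A : Type*) [Field k] [Field K] [Algebra k K]
    [CommRing A] [IsLocalRing A] [Algebra k A] [FiniteDimensional k A]
    (m : Ideal (A ⊗[k] K)) [m.IsMaximal] :
    moduleLength (Localization.AtPrime m) (Localization.AtPrime m) =
      moduleLength A A *
        moduleLength (Localization.AtPrime m)
          (Localization.AtPrime m ⧸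
            Ideal.map
              ((algebraMap (A ⊗[k] K) (Localization.AtPrime m)).comp
                (algebraMap A (A ⊗[k] K)))
              (IsLocalRing.maximalIdeal A)) := by
  set R := A ⊗[k] K with hR
  set B := Localization.AtPrime m with hB
  haveI : Module.Flat R B := Localization.flat _ _
  haveI : Module.Flat A B := Module.Flat.trans A R B
  haveI : IsNoetherian A A := isNoetherian_of_tower k inferInstance
  haveI : IsArtinian A A := isArtinian_of_tower k inferInstance
  have hcomp : (algebraMap R B).comp (algebraMap A R) = algebraMap A B := rfl
  rw [hcomp]
  have h0 := key_length (A := A) (B := B) ⊥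
  rw [Ideal.map_bot,
    moduleLength_congr (Submodule.quotEquivOfEqBot (⊥ : Ideal B) rfl),
    moduleLength_congr (Submodule.quotEquivOfEqBot (⊥ : Ideal A) rfl)] at h0
  exact h0
end

section
/- Let C be a small category and let ρ, σ, τ be Grothendieck pretopologies on C such that every ρ-covering family and every σ-covering family is also a τ-covering family, and such that τ is ρ-then-σ refinable. Let F be a presheaf of sets (or of abelian groups) on C. If F is ρ-separated, then the sheafification of F with respect to the Grothendieck topology generated by σ is again ρ-separated, and hence is separated for the Grothendieck topology generated by τ. -/
open CategoryTheory CategoryTheory.Limits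

universe u

variable {C : Type u} [SmallCategory C] [HasPullbacks C]

/-- A pretopology `τ` is `ρ`-then-`σ` refinable if every `τ`-covering family admits a refinement
of the form `{V_{ij} → U_i → X}` where `{U_i → X}` is a `σ`-covering family and each
`{V_{ij} → U_i}` is a `ρ`-covering family; here a refinement of a covering family is a family
each member of which factors through some member of the original family. -/
def RefinableBy (τ ρ σ : Pretopology C) : Prop :=
  ∀ ⦃X : C⦄, ∀ T ∈ τ X, ∃ S ∈ σ X,
    ∃ R : ∀ ⦃Y : C⦄ ⦃f : Y ⟶ X⦄, S f → Presieve Y,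
      (∀ ⦃Y : C⦄ ⦃f : Y ⟶ X⦄ (hf : S f), R hf ∈ ρ Y) ∧
      (∀ ⦃Y : C⦄ (g : Y ⟶ X), Presieve.bind S R g → (Sieve.generate T).arrows g)

/-- A presheaf is separated for a pretopology if it is separated for each of its covering
families. -/
def PreSeparated (ρ : Pretopology C) (F : Cᵒᵖ ⥤ Type u) : Prop :=
  ∀ ⦃X : C⦄, ∀ R ∈ ρ X, Presieve.IsSeparatedFor F R

section Aux

open Opposite

/-- From `IsSeparatedFor` extract the usual extensionality statement. -/
lemma sepFor_ext {F : Cᵒᵖ ⥤ Type u} {X : C} {R : Presieve X}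
    (h : Presieve.IsSeparatedFor F R) {s t : F.obj (op X)}
    (hst : ∀ ⦃Y : C⦄ (f : Y ⟶ X), R f → F.map f.op s = F.map f.op t) : s = t := by
  refine h (fun Y f _ => F.map f.op s) s t ?_ ?_
  · intro Y f hf
    rfl
  · intro Y f hf
    exact (hst f hf).symm

end Aux

/-- Let `ρ, σ, τ` be Grothendieck pretopologies with every `ρ`-cover and every `σ`-cover a
`τ`-cover, and `τ` `ρ`-then-`σ` refinable.  If a presheaf of sets `F` is `ρ`-separated, then its
sheafification for the topology generated by `σ` is again `ρ`-separated, and hence is separated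
for the topology generated by `τ`. -/
theorem stmt5 (ρ σ τ : Pretopology C)
    (hρτ : ∀ ⦃X : C⦄ (R : Presieve X), R ∈ ρ X → R ∈ τ X)
    (hστ : ∀ ⦃X : C⦄ (R : Presieve X), R ∈ σ X → R ∈ τ X)
    (href : RefinableBy τ ρ σ)
    (F : Cᵒᵖ ⥤ Type u) (hF : PreSeparated ρ F) :
    PreSeparated ρ ((Pretopology.toGrothendieck σ).sheafify F) ∧
    (∀ ⦃X : C⦄ (S : Sieve X), S ∈ Pretopology.toGrothendieck τ X →
      Presieve.IsSeparatedFor ((Pretopology.toGrothendieck σ).sheafify F) S.arrows) := by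
  open Opposite in
  set J := Pretopology.toGrothendieck σ with hJdef
  set G := J.sheafify F with hGdef
  set ℓ := J.toSheafify F with hℓdef
  have hG : Presieve.IsSheaf J G :=
    (isSheaf_iff_isSheaf_of_type J G).mp (J.sheafify_isSheaf F)
  -- separatedness of G for covering sieves
  have sepG : ∀ {X : C} (W : Sieve X), W ∈ J X → ∀ {s t : G.obj (op X)},
      (∀ ⦃Y : C⦄ (g : Y ⟶ X), W.arrows g → G.map g.op s = G.map g.op t) → s = t := by
    intro X W hW s t hst
    exact sepFor_ext ((hG W hW).isSeparatedFor) hst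
  -- naturality helper
  have natℓ : ∀ {Y Z : C} (g : Z ⟶ Y) (a : F.obj (op Y)),
      ℓ.app (op Z) (F.map g.op a) = G.map g.op (ℓ.app (op Y) a) := by
    intro Y Z g a
    exact NatTrans.naturality_apply ℓ g.op a
  -- if two sections of `F` agree on a `J`-covering sieve, their images in `G` agree
  have keyJ' : ∀ {Y : C} (a b : F.obj (op Y)),
      Presheaf.equalizerSieve (F := F) a b ∈ J Y → ℓ.app (op Y) a = ℓ.app (op Y) b := by
    intro Y a b h
    refine sepG _ h ?_
    intro Z g hg
    rw [← natℓ, ← natℓ]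
    exact congrArg (ℓ.app (op Z)) hg
  -- Claim 1: if two sections of `F` agree on a `Jτ`-covering sieve, their images in `G` agree
  have keyτ : ∀ {Y : C} (a b : F.obj (op Y)),
      Presheaf.equalizerSieve (F := F) a b ∈ Pretopology.toGrothendieck τ Y →
      ℓ.app (op Y) a = ℓ.app (op Y) b := by
    intro Y a b h
    obtain ⟨T, hT, hle⟩ := h
    obtain ⟨S, hS, R, hR, hfac⟩ := href T hT
    apply keyJ'
    rw [Pretopology.mem_toGrothendieck]
    refine ⟨S, hS, ?_⟩
    intro U u hu
    show F.map u.op a = F.map u.op b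
    refine sepFor_ext (hF (R hu) (hR hu)) ?_
    intro V v hv
    have hb : Presieve.bind S R (v ≫ u) := ⟨_, v, u, hu, hv, rfl⟩
    obtain ⟨W, i, w, hw, comm⟩ := hfac _ hb
    have heq : F.map (v ≫ u).op a = F.map (v ≫ u).op b := by
      rw [← comm]
      have hw' : F.map w.op a = F.map w.op b := hle _ _ hw
      rw [op_comp, FunctorToTypes.map_comp_apply, FunctorToTypes.map_comp_apply, hw']
    rw [← FunctorToTypes.map_comp_apply, ← FunctorToTypes.map_comp_apply, ← op_comp]
    exact heq
  -- Part 1: G is ρ-separated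
  have part1 : PreSeparated ρ G := by
    intro X R hR x t₁ t₂ h₁ h₂
    have hRst : ∀ ⦃Z : C⦄ (f : Z ⟶ X), R f → G.map f.op t₁ = G.map f.op t₂ := by
      intro Z f hf
      rw [h₁ f hf, h₂ f hf]
    have hW : (Presheaf.imageSieve ℓ t₁ ⊓ Presheaf.imageSieve ℓ t₂) ∈ J X :=
      J.intersection_covering (Presheaf.imageSieve_mem J ℓ t₁) (Presheaf.imageSieve_mem J ℓ t₂)
    refine sepG _ hW ?_
    rintro Y h ⟨⟨a, ha⟩, ⟨b, hb⟩⟩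
    have ha' : ℓ.app (op Y) a = G.map h.op t₁ := ha
    have hb' : ℓ.app (op Y) b = G.map h.op t₂ := hb
    rw [← ha', ← hb']
    apply keyτ
    rw [Pretopology.mem_toGrothendieck]
    have hpb : Presieve.pullbackArrows h R ∈ ρ Y := ρ.pullbacks h R hR
    have hploc : ∀ (P : C) (p : P ⟶ Y), Presieve.pullbackArrows h R p →
        ∃ Sp ∈ σ P,
          Sp ≤ ((Presheaf.equalizerSieve (F := F) (F.map p.op a) (F.map p.op b) : Sieve P) :
            Presieve P) := by
      rintro _ _ ⟨Z, g, hg⟩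
      have hmem := Presheaf.equalizerSieve_mem J (J.toSheafify F)
        (F.map (pullback.snd g h).op a) (F.map (pullback.snd g h).op b) (by
        show ℓ.app _ (F.map (pullback.snd g h).op a) = ℓ.app _ (F.map (pullback.snd g h).op b)
        calc ℓ.app _ (F.map (pullback.snd g h).op a)
          = G.map (pullback.snd g h).op (ℓ.app _ a) := natℓ _ _
        _ = G.map (pullback.snd g h).op (G.map h.op t₁) := by rw [ha']
        _ = G.map (pullback.snd g h ≫ h).op t₁ := by
            rw [op_comp, FunctorToTypes.map_comp_apply]
        _ = G.map (pullback.fst g h ≫ g).op t₁ := by rw [pullback.condition]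
        _ = G.map (pullback.fst g h).op (G.map g.op t₁) := by
            rw [op_comp, FunctorToTypes.map_comp_apply]
        _ = G.map (pullback.fst g h).op (G.map g.op t₂) := by rw [hRst g hg]
        _ = G.map (pullback.fst g h ≫ g).op t₂ := by
            rw [op_comp, FunctorToTypes.map_comp_apply]
        _ = G.map (pullback.snd g h ≫ h).op t₂ := by rw [pullback.condition]
        _ = G.map (pullback.snd g h).op (G.map h.op t₂) := by
            rw [op_comp, FunctorToTypes.map_comp_apply]
        _ = G.map (pullback.snd g h).op (ℓ.app _ b) := by rw [hb']
        _ = ℓ.app _ (F.map (pullback.snd g h).op b) := (natℓ _ _).symm)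
      rw [← Pretopology.mem_toGrothendieck]
      exact hmem
    choose Sp hSpσ hSple using hploc
    refine ⟨Presieve.bind (Presieve.pullbackArrows h R) (fun P p hp => Sp P p hp),
      τ.transitive _ _ (hρτ _ hpb) (fun P p hp => hστ _ (hSpσ P p hp)), ?_⟩
    rintro Q q ⟨P, e, p, hp, he, rfl⟩
    have heq := hSple P p hp _ _ he
    show F.map (e ≫ p).op a = F.map (e ≫ p).op b
    rw [op_comp, FunctorToTypes.map_comp_apply, FunctorToTypes.map_comp_apply]
    exact heq
  refine ⟨part1, ?_⟩
  -- Part 2: G is separated for every Jτ-covering sieve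
  intro X S hS x t₁ t₂ h₁ h₂
  have hag : ∀ ⦃Z : C⦄ (g : Z ⟶ X), S.arrows g → G.map g.op t₁ = G.map g.op t₂ := by
    intro Z g hg
    rw [h₁ g hg, h₂ g hg]
  obtain ⟨T, hT, hTle⟩ := hS
  obtain ⟨S₀, hS₀, R, hRmem, hfac⟩ := href T hT
  refine sepG (Sieve.generate S₀) ?_ ?_
  · rw [Pretopology.mem_toGrothendieck]
    exact ⟨S₀, hS₀, Sieve.le_generate S₀⟩
  rintro Y g ⟨Z, i, u, hu, rfl⟩
  have hu2 : G.map u.op t₁ = G.map u.op t₂ := by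
    refine sepFor_ext (part1 (R hu) (hRmem hu)) ?_
    intro V v hv
    have hb : Presieve.bind S₀ R (v ≫ u) := ⟨_, v, u, hu, hv, rfl⟩
    obtain ⟨W, j, w, hw, comm⟩ := hfac _ hb
    have hSvu : S.arrows (v ≫ u) := by
      rw [← comm]
      exact S.downward_closed (hTle _ _ hw) j
    have heq := hag _ hSvu
    rw [op_comp, FunctorToTypes.map_comp_apply, FunctorToTypes.map_comp_apply] at heq
    exact heq
  rw [op_comp, FunctorToTypes.map_comp_apply, FunctorToTypes.map_comp_apply, hu2]
end

section
/- Let C be a small category and let ρ, σ, τ be Grothendieck pretopologies on C such that every ρ-covering family and every σ-covering family is also a τ-covering family, and such that τ is ρ-then-σ refinable. Let F be a presheaf of sets (or of abelian groups) on C. If F is a sheaf for every ρ-covering family and F is σ-separated, then the sheafification of F with respect to the Grothendieck topology generated by σ is a sheaf for the Grothendieck topology generated by τ; equivalently, the canonical morphism from the σ-sheafification of F to the τ-sheafification of F is an isomorphism. In particular, a presheaf that is a sheaf for every ρ-covering family and a sheaf for every σ-covering family is a sheaf for the topology generated by τ. -/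
open CategoryTheory CategoryTheory.Limits Opposite

universe u

variable {C : Type u} [SmallCategory C] [HasPullbacks C]

section Aux

variable {F : Cᵒᵖ ⥤ Type u}

/-- Separatedness for a presieve implies separatedness for any larger presieve. -/
lemma aux_sep_of_le {X : C} {Q P : Presieve X}
    (h : ∀ ⦃Y : C⦄ ⦃f : Y ⟶ X⦄, Q f → P f)
    (hQ : Presieve.IsSeparatedFor F Q) : Presieve.IsSeparatedFor F P := by
  intro x t₁ t₂ h₁ h₂
  exact hQ (fun Y f hf => x f (h hf)) t₁ t₂ (fun Y f hf => h₁ f (h hf))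
    (fun Y f hf => h₂ f (h hf))

/-- Separatedness for a bind follows from separatedness for the pieces. -/
lemma aux_sep_bind {X : C} {S : Presieve X} {R : ∀ ⦃Y : C⦄ ⦃f : Y ⟶ X⦄, S f → Presieve Y}
    (hS : Presieve.IsSeparatedFor F S)
    (hR : ∀ ⦃Y : C⦄ ⦃f : Y ⟶ X⦄ (hf : S f), Presieve.IsSeparatedFor F (R hf)) :
    Presieve.IsSeparatedFor F (Presieve.bind S R) := by
  intro x t₁ t₂ h₁ h₂
  apply hS.ext
  intro Y f hf
  apply (hR hf).ext
  intro Z g hg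
  have e₁ := h₁ (g ≫ f) (Presieve.bind_comp f hf hg)
  have e₂ := h₂ (g ≫ f) (Presieve.bind_comp f hf hg)
  rw [← FunctorToTypes.map_comp_apply, ← op_comp, e₁,
    ← FunctorToTypes.map_comp_apply, ← op_comp, e₂]

/-- A presheaf which is a sheaf for `ρ`-covers and `σ`-separated is separated for every
sieve in the topology generated by `τ`. -/
lemma aux_tau_sep (ρ σ τ : Pretopology C)
    (href : RefinableBy τ ρ σ)
    (F : Cᵒᵖ ⥤ Type u)
    (hρsheaf : ∀ ⦃X : C⦄ (R : Presieve X), R ∈ ρ X → Presieve.IsSheafFor F R)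
    (hσsep : ∀ ⦃X : C⦄ (R : Presieve X), R ∈ σ X → Presieve.IsSeparatedFor F R) :
    ∀ ⦃X : C⦄ (W : Sieve X), W ∈ Pretopology.toGrothendieck τ X →
      Presieve.IsSeparatedFor F (W : Presieve X) := by
  intro X W hW
  obtain ⟨T, hT, hTW⟩ := hW
  obtain ⟨S, hS, R, hR, hbind⟩ := href T hT
  refine aux_sep_of_le ?_
    (aux_sep_bind (hσsep S hS) (fun Y f hf => (hρsheaf _ (hR hf)).isSeparatedFor))
  intro Y g hg
  obtain ⟨Z, h, k, hk, rfl⟩ := hbind g hg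
  exact W.downward_closed (hTW _ _ hk) h

/-- A presheaf which is a sheaf for all `ρ`-covers and all `σ`-covers is a sheaf for the
topology generated by `τ`, provided `τ` is `ρ`-then-`σ` refinable. -/
lemma aux_main (ρ σ τ : Pretopology C)
    (hρτ : ∀ ⦃X : C⦄ (R : Presieve X), R ∈ ρ X → R ∈ τ X)
    (hστ : ∀ ⦃X : C⦄ (R : Presieve X), R ∈ σ X → R ∈ τ X)
    (href : RefinableBy τ ρ σ)
    (G : Cᵒᵖ ⥤ Type u)
    (hρG : ∀ ⦃X : C⦄ (R : Presieve X), R ∈ ρ X → Presieve.IsSheafFor G R)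
    (hσG : ∀ ⦃X : C⦄ (R : Presieve X), R ∈ σ X → Presieve.IsSheafFor G R) :
    Presieve.IsSheaf (Pretopology.toGrothendieck τ) G := by
  classical
  set Jρ := Pretopology.toGrothendieck ρ with hJρ
  set Jτ := Pretopology.toGrothendieck τ with hJτ
  have hGρ : Presieve.IsSheaf Jρ G :=
    (Presieve.isSheaf_pretopology ρ).2 (fun {X} R hR => hρG R hR)
  intro X W hW
  obtain ⟨T, hT, hTW⟩ := hW
  obtain ⟨S, hS, R, hR, hbind⟩ := href T hT
  let U : Sieve X := Sieve.generate S
  let B : ∀ ⦃Y : C⦄ ⦃f : Y ⟶ X⦄, U f → Sieve Y := fun Y f hf =>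
    (Sieve.generate (R hf.choose_spec.choose_spec.choose_spec.1)).pullback
      hf.choose_spec.choose
  have hBρ : ∀ ⦃Y : C⦄ ⦃f : Y ⟶ X⦄ (hf : U f), B hf ∈ Jρ Y := fun Y f hf =>
    Jρ.pullback_stable _
      ⟨R hf.choose_spec.choose_spec.choose_spec.1,
        hR hf.choose_spec.choose_spec.choose_spec.1, Sieve.le_generate _⟩
  have hU : Presieve.IsSheafFor G (U : Presieve X) :=
    (Presieve.isSheafFor_iff_generate S).1 (hσG S hS)
  have hB : ∀ ⦃Y : C⦄ ⦃f : Y ⟶ X⦄ (hf : U f), Presieve.IsSheafFor G (B hf : Presieve Y) :=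
    fun Y f hf => hGρ _ (hBρ hf)
  have hB' : ∀ ⦃Y : C⦄ ⦃f : Y ⟶ X⦄ (hf : U f) ⦃Z : C⦄ (g : Z ⟶ Y),
      Presieve.IsSeparatedFor G ((B hf).pullback g : Presieve Z) := fun Y f hf Z g =>
    (hGρ _ (Jρ.pullback_stable g (hBρ hf))).isSeparatedFor
  have hVsheaf : Presieve.IsSheafFor G (Sieve.bind (U : Presieve X) B : Presieve X) :=
    Sheaf.isSheafFor_bind G U B hU hB hB'
  -- the bind sieve is contained in `W`
  have hVW : ∀ ⦃Y : C⦄ ⦃g : Y ⟶ X⦄,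
      (Sieve.bind (U : Presieve X) B : Presieve X) g → (W : Presieve X) g := by
    rintro Y g ⟨Z, k, f, hf, hk, rfl⟩
    obtain ⟨M, m, r, hr, em⟩ := hk
    have hfac : hf.choose_spec.choose ≫ hf.choose_spec.choose_spec.choose = f :=
      hf.choose_spec.choose_spec.choose_spec.2
    have hb : Presieve.bind S R (r ≫ hf.choose_spec.choose_spec.choose) :=
      Presieve.bind_comp _ hf.choose_spec.choose_spec.choose_spec.1 hr
    obtain ⟨N, n, tarr, ht', en⟩ := hbind _ hb
    have e : k ≫ f = (m ≫ n) ≫ tarr := by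
      rw [← hfac, ← Category.assoc, ← em, Category.assoc, ← en, ← Category.assoc]
    rw [e]
    exact W.downward_closed (hTW _ _ ht') (m ≫ n)
  -- the bind sieve is a covering sieve for `Jτ`
  have hUτ : U ∈ Jτ X := ⟨S, hστ S hS, Sieve.le_generate S⟩
  have hBτ : ∀ ⦃Y : C⦄ ⦃f : Y ⟶ X⦄ (hf : U f), B hf ∈ Jτ Y := fun Y f hf =>
    Jτ.pullback_stable _
      ⟨R hf.choose_spec.choose_spec.choose_spec.1,
        hρτ _ (hR hf.choose_spec.choose_spec.choose_spec.1), Sieve.le_generate _⟩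
  have hVτ : Sieve.bind (U : Presieve X) B ∈ Jτ X := Jτ.bind_covering hUτ hBτ
  refine Presieve.isSheafFor_subsieve_aux G (S := Sieve.bind (U : Presieve X) B) (fun Y g hg => hVW hg) hVsheaf ?_
  intro Y f _
  exact aux_tau_sep ρ σ τ href G hρG
    (fun X' R' hR' => (hσG R' hR').isSeparatedFor) _ (Jτ.pullback_stable f hVτ)

end Aux

/-- Let `ρ, σ, τ` be Grothendieck pretopologies with every `ρ`-cover and every `σ`-cover a
`τ`-cover, and `τ` `ρ`-then-`σ` refinable.  If a presheaf of sets `F` is a sheaf for every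
`ρ`-covering family and is `σ`-separated, then the sheafification of `F` for the topology
generated by `σ` is a sheaf for the topology generated by `τ`.  In particular a presheaf which
is a sheaf for every `ρ`-cover and for every `σ`-cover is a sheaf for the topology generated
by `τ`. -/
theorem stmt6 (ρ σ τ : Pretopology C)
    (hρτ : ∀ ⦃X : C⦄ (R : Presieve X), R ∈ ρ X → R ∈ τ X)
    (hστ : ∀ ⦃X : C⦄ (R : Presieve X), R ∈ σ X → R ∈ τ X)
    (href : RefinableBy τ ρ σ)
    (F : Cᵒᵖ ⥤ Type u)
    (hρsheaf : ∀ ⦃X : C⦄ (R : Presieve X), R ∈ ρ X → Presieve.IsSheafFor F R)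
    (hσsep : ∀ ⦃X : C⦄ (R : Presieve X), R ∈ σ X → Presieve.IsSeparatedFor F R) :
    Presieve.IsSheaf (Pretopology.toGrothendieck τ)
      ((Pretopology.toGrothendieck σ).sheafify F) ∧
    (∀ G : Cᵒᵖ ⥤ Type u,
      (∀ ⦃X : C⦄ (R : Presieve X), R ∈ ρ X → Presieve.IsSheafFor G R) →
      (∀ ⦃X : C⦄ (R : Presieve X), R ∈ σ X → Presieve.IsSheafFor G R) →
      Presieve.IsSheaf (Pretopology.toGrothendieck τ) G) := by
  refine ⟨?_, fun G hρG hσG => aux_main ρ σ τ hρτ hστ href G hρG hσG⟩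
  set Jσ := Pretopology.toGrothendieck σ with hJσ
  set Jτ := Pretopology.toGrothendieck τ with hJτ
  have hστle : ∀ ⦃X : C⦄ ⦃W : Sieve X⦄, W ∈ Jσ X → W ∈ Jτ X := by
    rintro X W ⟨R, hR, hle⟩
    exact ⟨R, hστ R hR, hle⟩
  set Gt := Jτ.sheafify F with hGtdef
  let φ : F ⟶ Gt := Jτ.toSheafify F
  have hGtI : Presheaf.IsSheaf Jτ Gt := Jτ.sheafify_isSheaf F
  have hGtT : Presieve.IsSheaf Jτ Gt := (isSheaf_iff_isSheaf_of_type Jτ Gt).1 hGtI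
  have hGtσ : Presieve.IsSheaf Jσ Gt := fun X S hS => hGtT S (hστle hS)
  have hGtσI : Presheaf.IsSheaf Jσ Gt := (isSheaf_iff_isSheaf_of_type Jσ Gt).2 hGtσ
  have hFτsep : ∀ ⦃X : C⦄ (W : Sieve X), W ∈ Jτ X → Presieve.IsSeparatedFor F (W : Presieve X) :=
    aux_tau_sep ρ σ τ href F hρsheaf hσsep
  haveI hinjτ : Presheaf.IsLocallyInjective Jτ φ :=
    Presheaf.isLocallyInjective_toSheafify Jτ F
  haveI hsurjτ : Presheaf.IsLocallySurjective Jτ φ :=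
    Presheaf.isLocallySurjective_toSheafify Jτ F
  have hφinj : ∀ (X : Cᵒᵖ), Function.Injective (φ.app X) := by
    intro X x y h
    have hmem := Presheaf.equalizerSieve_mem Jτ φ x y h
    exact (hFτsep _ hmem).ext (fun Y f hf => hf)
  -- the image sieve of any section of `Gt` under `φ` is `Jσ`-covering
  have hmemσ : ∀ (X : C) (t : Gt.obj (op X)), Presheaf.imageSieve φ t ∈ Jσ X := by
    intro X t
    obtain ⟨T, hT, hTle⟩ := Presheaf.imageSieve_mem Jτ φ t
    obtain ⟨S, hS, R, hR, hbind⟩ := href T hT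
    refine ⟨S, hS, ?_⟩
    intro Y f hf
    have hsec : ∀ ⦃Z : C⦄ ⦃g : Z ⟶ Y⦄ (_ : R hf g),
        ∃ s : F.obj (op Z), φ.app _ s = Gt.map (g ≫ f).op t := by
      intro Z g hg
      have hb : Presieve.bind S R (g ≫ f) := Presieve.bind_comp f hf hg
      obtain ⟨M, m, r, hrT, em⟩ := hbind _ hb
      have : Presheaf.imageSieve φ t (g ≫ f) := by
        rw [← em]
        exact (Presheaf.imageSieve φ t).downward_closed (hTle _ _ hrT) m
      exact this
    choose sec hsec' using hsec
    set x : Presieve.FamilyOfElements F (R hf) := fun Z g hg => sec hg with hx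
    have hcomp : x.Compatible := by
      intro Z₁ Z₂ Z g₁ g₂ f₁ f₂ h₁ h₂ hcomm
      apply hφinj
      have n₁ := NatTrans.naturality_apply φ g₁.op (sec h₁)
      have n₂ := NatTrans.naturality_apply φ g₂.op (sec h₂)
      show φ.app _ (F.map g₁.op (sec h₁)) = φ.app _ (F.map g₂.op (sec h₂))
      rw [n₁, n₂, hsec' h₁, hsec' h₂, ← FunctorToTypes.map_comp_apply,
        ← FunctorToTypes.map_comp_apply, ← op_comp, ← op_comp, ← Category.assoc,
        ← Category.assoc, hcomm]
    set sf := (hρsheaf _ (hR hf)).amalgamate x hcomp with hsf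
    refine ⟨sf, ?_⟩
    have hsepGt : Presieve.IsSeparatedFor Gt (R hf) :=
      (Presieve.isSeparatedFor_iff_generate).2
        (hGtT _ ⟨R hf, hρτ _ (hR hf), Sieve.le_generate _⟩).isSeparatedFor
    apply hsepGt.ext
    intro Z g hg
    have n := NatTrans.naturality_apply φ g.op sf
    show Gt.map g.op (φ.app (op Y) sf) = Gt.map g.op (Gt.map f.op t)
    rw [← n, (hρsheaf _ (hR hf)).valid_glue hcomp g hg]
    show φ.app _ (x g hg) = _
    rw [hsec' hg, ← FunctorToTypes.map_comp_apply, ← op_comp]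
  -- package into sheaves for `Jσ` and compare
  let Fs : Sheaf Jσ (Type u) := ⟨Jσ.sheafify F, Jσ.sheafify_isSheaf F⟩
  let Gs : Sheaf Jσ (Type u) := ⟨Gt, hGtσI⟩
  let ψ : Fs ⟶ Gs := ⟨Jσ.sheafifyLift φ hGtσI⟩
  have hfac : Jσ.toSheafify F ≫ ψ.hom = φ := Jσ.toSheafify_sheafifyLift φ hGtσI
  haveI hψsurj : Presheaf.IsLocallySurjective Jσ ψ.hom := ⟨fun {X} t => by
    refine Jσ.superset_covering ?_ (hmemσ X t)
    rintro Y g ⟨s, hs⟩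
    refine ⟨(Jσ.toSheafify F).app _ s, ?_⟩
    rw [← hfac] at hs
    exact hs⟩
  haveI hψinj : Presheaf.IsLocallyInjective Jσ ψ.hom := ⟨fun {X} x y h => by
    have hx := Presheaf.imageSieve_mem Jσ (Jσ.toSheafify F) x
    have hy := Presheaf.imageSieve_mem Jσ (Jσ.toSheafify F) y
    refine Jσ.superset_covering ?_ (Jσ.intersection_covering hx hy)
    rintro Y g ⟨⟨s, hs⟩, ⟨s', hs'⟩⟩
    have hs₂ : (Jσ.toSheafify F).app (op Y) s = (Jσ.sheafify F).map g.op x := hs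
    have hs₂' : (Jσ.toSheafify F).app (op Y) s' = (Jσ.sheafify F).map g.op y := hs'
    have h₂ : ψ.hom.app X x = ψ.hom.app X y := h
    have e : φ.app _ s = φ.app _ s' := by
      rw [← hfac]
      show ψ.hom.app _ ((Jσ.toSheafify F).app _ s)
        = ψ.hom.app _ ((Jσ.toSheafify F).app _ s')
      rw [hs₂, hs₂']
      have n₁ := NatTrans.naturality_apply ψ.hom g.op x
      have n₂ := NatTrans.naturality_apply ψ.hom g.op y
      rw [n₁, n₂, h₂]
    have hss : s = s' := hφinj _ e
    show (Jσ.sheafify F).map g.op x = (Jσ.sheafify F).map g.op y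
    rw [← hs₂, ← hs₂', hss]⟩
  haveI : IsIso ψ := by
    rw [← Sheaf.isLocallyBijective_iff_isIso ψ]
    exact ⟨hψinj, hψsurj⟩
  let e : Jσ.sheafify F ≅ Gt := (sheafToPresheaf Jσ (Type u)).mapIso (asIso ψ)
  intro X W hW
  exact Presieve.isSheafFor_iso e.symm (hGtT W hW)
end

section
/- Let C be a category with pullbacks, F a presheaf of abelian groups (or of sets) on C, and V →g U →f X morphisms in C. For a morphism W → T, let Ȟ⁰(W/T, F) denote the equalizer of the two maps F(W) ⇉ F(W ×_T W) induced by the two projections. Assume: (i) F satisfies the sheaf condition for g, i.e. F(U) → F(V) ⇉ F(V ×_U V) is an equalizer diagram; and (ii) the map F(U ×_X U) → F(V ×_X V) induced by g ×_X g is injective. Then the canonical map Ȟ⁰(U/X, F) → Ȟ⁰(V/X, F), induced by restriction along g, is an isomorphism. -/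
open CategoryTheory CategoryTheory.Limits Opposite

/-- Let `F` be a presheaf of sets on a category with pullbacks and `V ⟶g U ⟶f X` morphisms.
Write `Ȟ⁰(W/T, F)` for the equalizer of the two restrictions `F(W) ⇉ F(W ×_T W)`.  Assume
(i) `F` satisfies the sheaf condition for `g`, i.e. `F(U) → F(V) ⇉ F(V ×_U V)` is an equalizer
diagram, and (ii) `F(U ×_X U) → F(V ×_X V)` is injective.  Then the canonical restriction map
`Ȟ⁰(U/X, F) → Ȟ⁰(V/X, F)` is an isomorphism; this is expressed below by saying that `F(g)`
maps cocycles for `f` to cocycles for `g ≫ f`, injectively, and onto all such cocycles. -/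
theorem stmt13 {C : Type*} [Category C] [HasPullbacks C]
    (F : Cᵒᵖ ⥤ Type*) {X U V : C} (f : U ⟶ X) (g : V ⟶ U)
    -- (i) `F(U) → F(V) ⇉ F(V ×_U V)` is an equalizer diagram:
    (hsheaf : ∀ y : F.obj (op V),
      F.map (pullback.fst g g).op y = F.map (pullback.snd g g).op y →
      ∃! x : F.obj (op U), F.map g.op x = y)
    -- (ii) `F(U ×_X U) → F(V ×_X V)` is injective:
    (hinj : Function.Injective
      (F.map (pullback.map (g ≫ f) (g ≫ f) f f g g (𝟙 X)
        (by simp) (by simp)).op)) :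
    -- restriction maps `Ȟ⁰(U/X, F)` into `Ȟ⁰(V/X, F)` …
    (∀ x : F.obj (op U),
      F.map (pullback.fst f f).op x = F.map (pullback.snd f f).op x →
      F.map (pullback.fst (g ≫ f) (g ≫ f)).op (F.map g.op x) =
        F.map (pullback.snd (g ≫ f) (g ≫ f)).op (F.map g.op x)) ∧
    -- … injectively …
    (∀ x x' : F.obj (op U),
      F.map (pullback.fst f f).op x = F.map (pullback.snd f f).op x →
      F.map (pullback.fst f f).op x' = F.map (pullback.snd f f).op x' →
      F.map g.op x = F.map g.op x' → x = x') ∧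
    -- … and surjectively onto `Ȟ⁰(V/X, F)`:
    (∀ y : F.obj (op V),
      F.map (pullback.fst (g ≫ f) (g ≫ f)).op y =
        F.map (pullback.snd (g ≫ f) (g ≫ f)).op y →
      ∃ x : F.obj (op U),
        (F.map (pullback.fst f f).op x = F.map (pullback.snd f f).op x) ∧
        F.map g.op x = y) := by
  set m : pullback (g ≫ f) (g ≫ f) ⟶ pullback f f :=
    pullback.map (g ≫ f) (g ≫ f) f f g g (𝟙 X) (by simp) (by simp) with hm
  have hmf : pullback.fst (g ≫ f) (g ≫ f) ≫ g = m ≫ pullback.fst f f := by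
    simp [hm, pullback.map]
    exact (pullback.lift_fst _ _ _).symm
  have hms : pullback.snd (g ≫ f) (g ≫ f) ≫ g = m ≫ pullback.snd f f := by
    simp [hm, pullback.map]
    exact (pullback.lift_snd _ _ _).symm
  have key : ∀ x : F.obj (op U),
      F.map (pullback.fst f f).op x = F.map (pullback.snd f f).op x →
      F.map (pullback.fst (g ≫ f) (g ≫ f)).op (F.map g.op x) =
        F.map (pullback.snd (g ≫ f) (g ≫ f)).op (F.map g.op x) := by
    intro x hx
    have h1 := congrArg (fun h => F.map h.op x) hmf
    have h2 := congrArg (fun h => F.map h.op x) hms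
    simp only [op_comp, FunctorToTypes.map_comp_apply] at h1 h2
    rw [h1, h2, hx]
  refine ⟨key, ?_, ?_⟩
  · intro x x' hx hx' hgx
    -- x is the unique section restricting to F g x on V
    have hcomp : F.map (pullback.fst g g).op (F.map g.op x) =
        F.map (pullback.snd g g).op (F.map g.op x) := by
      have := congrArg (fun h => F.map h.op x) (pullback.condition (f := g) (g := g))
      simpa only [op_comp, FunctorToTypes.map_comp_apply] using this
    obtain ⟨z, -, huniq⟩ := hsheaf (F.map g.op x) hcomp
    exact (huniq x rfl).trans (huniq x' hgx.symm).symm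
  · intro y hy
    -- y is compatible on V ×_U V
    set e : pullback g g ⟶ pullback (g ≫ f) (g ≫ f) :=
      pullback.map g g (g ≫ f) (g ≫ f) (𝟙 V) (𝟙 V) f (by simp) (by simp) with he
    have hef : pullback.fst g g = e ≫ pullback.fst (g ≫ f) (g ≫ f) := by simp [he, pullback.map]; exact (pullback.lift_fst _ _ _).symm
    have hes : pullback.snd g g = e ≫ pullback.snd (g ≫ f) (g ≫ f) := by simp [he, pullback.map]; exact (pullback.lift_snd _ _ _).symm
    have hcomp : F.map (pullback.fst g g).op y = F.map (pullback.snd g g).op y := by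
      rw [hef, hes]
      simp only [op_comp, FunctorToTypes.map_comp_apply]
      rw [hy]
    obtain ⟨x, hx, -⟩ := hsheaf y hcomp
    refine ⟨x, ?_, hx⟩
    apply hinj
    have h1 := congrArg (fun h => F.map h.op x) hmf
    have h2 := congrArg (fun h => F.map h.op x) hms
    simp only [op_comp, FunctorToTypes.map_comp_apply] at h1 h2
    rw [← h1, ← h2, hx, hy]
end

section
/- Let T be a triangulated category (a pretriangulated category satisfying the octahedral axiom) admitting all small coproducts, and suppose T is compactly generated: there is a set G of objects of T such that every g ∈ G is compact and such that an object E of T is zero whenever Hom(g⟦n⟧, E) = 0 for all g ∈ G and all n ∈ ℤ. Let S ⊆ ℤ be a multiplicatively closed set of integers. Then: (a) the inclusion into T of the full subcategory T[S⁻¹] of ℤ[S⁻¹]-local objects admits a left adjoint; and (b) the inclusion into T of the full subcategory _S T of objects F such that Hom(F, E) = 0 for every ℤ[S⁻¹]-local object E admits a right adjoint. -/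
set_option linter.unusedSectionVars false
set_option linter.unusedVariables false
set_option maxHeartbeats 1000000


open CategoryTheory CategoryTheory.Limits CategoryTheory.Pretriangulated DirectSum

universe v u

variable {T : Type u} [Category.{v} T]

/-- An object `E` of an additive category is `ℤ[S⁻¹]`-local if `n • 𝟙 E` is an isomorphism for
every `n ∈ S`. -/
def IsLocalObj [Preadditive T] (S : Set ℤ) (E : T) : Prop :=
  ∀ n ∈ S, IsIso (n • 𝟙 E)

/-- Postcomposition with a fixed morphism, as an additive map between hom groups. -/
def postcompHom [Preadditive T] (g : T) {A B : T} (h : A ⟶ B) : (g ⟶ A) →+ (g ⟶ B) :=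
  AddMonoidHom.mk' (fun φ => φ ≫ h) fun _ _ => Preadditive.add_comp _ _ _ _ _ _

/-- An object `g` is compact if for every small family `(X i)` the canonical map
`⊕ᵢ Hom(g, Xᵢ) → Hom(g, ∐ᵢ Xᵢ)` is bijective. -/
def IsCompactObj [Preadditive T] [HasCoproducts.{v} T] (g : T) : Prop :=
  ∀ (ι : Type v) [DecidableEq ι] (X : ι → T),
    Function.Bijective (DirectSum.toAddMonoid (fun i => postcompHom g (Sigma.ι X i)) :
      (⨁ i, (g ⟶ X i)) →+ (g ⟶ ∐ X))

namespace Stmt14Aux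


variable {A : Type*} [AddCommGroup A] (e : ℕ → ℤ)

/-- product of `e` over `[n, m)` -/
def P (n m : ℕ) : ℤ := ∏ i ∈ Finset.Ico n m, e i

noncomputable def tau : (⨁ _ : ℕ, A) →+ ⨁ _ : ℕ, A :=
  toAddMonoid fun n => (of (fun _ : ℕ => A) (n + 1)).comp (zsmulAddGroupHom (e n))

noncomputable def Phi : (⨁ _ : ℕ, A) →+ ⨁ _ : ℕ, A :=
  AddMonoidHom.id _ - tau e

lemma Phi_of (n : ℕ) (a : A) :
    Phi e (of (fun _ : ℕ => A) n a) =
      of (fun _ : ℕ => A) n a - of (fun _ : ℕ => A) (n + 1) (e n • a) := by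
  simp [Phi, tau, AddMonoidHom.sub_apply, toAddMonoid_of, zsmulAddGroupHom]

noncomputable def Fm (m : ℕ) : (⨁ _ : ℕ, A) →+ A :=
  toAddMonoid fun n => if n ≤ m then zsmulAddGroupHom (P e n m) else 0

lemma Fm_of (m n : ℕ) (a : A) :
    Fm e m (of (fun _ : ℕ => A) n a) = if n ≤ m then (P e n m) • a else 0 := by
  simp only [Fm, toAddMonoid_of]
  split <;> simp [zsmulAddGroupHom]

lemma Fm_Phi (m : ℕ) (c : ⨁ _ : ℕ, A) : Fm e m (Phi e c) = c m := by
  induction c using DirectSum.induction_on with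
  | zero => simp
  | of n a =>
    rw [Phi_of, map_sub, Fm_of, Fm_of]
    rcases lt_trichotomy n m with h | h | h
    · rw [if_pos h.le, if_pos (by omega : n + 1 ≤ m), of_eq_of_ne _ _ _ (by omega),
        smul_smul, P, P, Finset.prod_eq_prod_Ico_succ_bot h, mul_comm (e n), sub_self]
    · subst h
      rw [if_pos le_rfl, if_neg (by omega), of_eq_same, P, Finset.Ico_self,
        Finset.prod_empty, one_smul, sub_zero]
    · rw [if_neg (by omega), if_neg (by omega), of_eq_of_ne _ _ _ (by omega), sub_zero]
  | add x y hx hy => rw [map_add, map_add, hx, hy, DirectSum.add_apply]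

lemma Phi_inj : Function.Injective (Phi (A := A) e) := by
  rw [injective_iff_map_eq_zero]
  intro c hc
  refine DFinsupp.ext fun m => ?_
  have := Fm_Phi e m c
  rw [hc, map_zero] at this
  simpa using this.symm

lemma alg_push (n m : ℕ) (h : n ≤ m) (a : A) :
    ∃ c, Phi e c = of (fun _ : ℕ => A) n a - of (fun _ : ℕ => A) m ((P e n m) • a) := by
  induction m, h using Nat.le_induction with
  | base =>
    exact ⟨0, by simp [P]⟩
  | succ m hnm ih =>
    obtain ⟨c, hc⟩ := ih
    refine ⟨c + of (fun _ : ℕ => A) m ((P e n m) • a), ?_⟩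
    rw [map_add, hc, Phi_of]
    have : e m • P e n m • a = P e n (m + 1) • a := by
      rw [smul_smul, P, P, Finset.prod_Ico_succ_top hnm, mul_comm]
    rw [this]
    abel

lemma alg_red (b : ⨁ _ : ℕ, A) :
    ∃ (N : ℕ) (z : A) (c : ⨁ _ : ℕ, A), b = of (fun _ : ℕ => A) N z + Phi e c := by
  induction b using DirectSum.induction_on with
  | zero => exact ⟨0, 0, 0, by simp⟩
  | of n a => exact ⟨n, a, 0, by simp⟩
  | add x y hx hy =>
    obtain ⟨N₁, z₁, c₁, rfl⟩ := hx
    obtain ⟨N₂, z₂, c₂, rfl⟩ := hy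
    obtain ⟨d₁, hd₁⟩ := alg_push e N₁ (max N₁ N₂) (le_max_left _ _) z₁
    obtain ⟨d₂, hd₂⟩ := alg_push e N₂ (max N₁ N₂) (le_max_right _ _) z₂
    refine ⟨max N₁ N₂, P e N₁ (max N₁ N₂) • z₁ + P e N₂ (max N₁ N₂) • z₂,
      c₁ + c₂ + d₁ + d₂, ?_⟩
    rw [map_add, map_add, map_add, hd₁, hd₂, map_add]
    abel

lemma alg_ker (n : ℕ) (x : A) (c : ⨁ _ : ℕ, A) (h : Phi e c = of (fun _ : ℕ => A) n x) :
    ∃ m, n ≤ m ∧ P e n m • x = 0 := by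
  classical
  set m := max n (c.support.sup id + 1) with hm
  refine ⟨m, le_max_left _ _, ?_⟩
  have hcm : c m = 0 := by
    by_contra hne
    have hmem : m ∈ c.support := DFinsupp.mem_support_iff.2 hne
    have := Finset.le_sup (f := id) hmem
    simp only [id] at this
    omega
  have := Fm_Phi e m c
  rw [h, Fm_of, if_pos (le_max_left _ _)] at this
  rw [this, hcm]

variable {s : ℤ} (hocc : ∀ N : ℕ, ∃ k, N ≤ k ∧ e k = s)

include hocc in
lemma alg_surj (b : ⨁ _ : ℕ, A) :
    ∃ (a c : ⨁ _ : ℕ, A), b = s • a + Phi e c := by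
  obtain ⟨N, z, c, rfl⟩ := alg_red e b
  obtain ⟨k, hk, hek⟩ := hocc N
  obtain ⟨d, hd⟩ := alg_push e N (k + 1) (by omega) z
  refine ⟨of (fun _ : ℕ => A) (k + 1) (P e N k • z), c + d, ?_⟩
  have : P e N (k + 1) • z = s • (P e N k • z) := by
    rw [smul_smul, P, P, Finset.prod_Ico_succ_top hk, hek, mul_comm]
  rw [map_add, hd, ← map_zsmul, ← this]
  abel

include hocc in
lemma alg_inj (a c : ⨁ _ : ℕ, A) (h : s • a = Phi e c) :
    ∃ c', a = Phi e c' := by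
  obtain ⟨N, z, d, rfl⟩ := alg_red e a
  have h2 : Phi e (c - s • d) = of (fun _ : ℕ => A) N (s • z) := by
    rw [map_sub, ← h, smul_add, map_zsmul, map_zsmul]
    abel
  obtain ⟨m, hNm, hz⟩ := alg_ker e N (s • z) _ h2
  obtain ⟨k, hk, hek⟩ := hocc m
  have hzero : P e N (k + 1) • z = 0 := by
    have h3 : P e N (k + 1) = P e m k * (P e N m * s) := by
      rw [P, P, P, ← Finset.prod_Ico_consecutive _ hNm (by omega : m ≤ k + 1),
        Finset.prod_Ico_succ_top hk, hek]
      ring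
    rw [h3, mul_smul, mul_smul, hz, smul_zero]
  obtain ⟨d₂, hd₂⟩ := alg_push e N (k + 1) (by omega) z
  refine ⟨d₂ + d, ?_⟩
  rw [map_add, hd₂, hzero, map_zero, sub_zero]



section Cat

variable [Preadditive T]

lemma postcompHom_apply (g : T) {A B : T} (h : A ⟶ B) (x : g ⟶ A) :
    postcompHom g h x = x ≫ h := rfl

lemma bij_transport {M N : Type*} (q : M ≃ N) (fM : M → M) (fN : N → N)
    (hq : ∀ x, q (fM x) = fN (q x)) (h : Function.Bijective fM) : Function.Bijective fN := by
  have : fN = q ∘ fM ∘ q.symm := by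
    funext y
    simp only [Function.comp_apply, hq, Equiv.apply_symm_apply]
  rw [this]
  exact q.bijective.comp (h.comp q.symm.bijective)

lemma postcomp_iso_bij {X Y Z : T} (i : Y ⟶ Z) [IsIso i] :
    Function.Bijective (fun f : X ⟶ Y => f ≫ i) := by
  constructor
  · intro a b hab
    have := congrArg (fun z => z ≫ inv i) hab
    simpa using this
  · intro y
    exact ⟨y ≫ inv i, by simp⟩

section Shift

variable [HasShift T ℤ] [∀ n : ℤ, (shiftFunctor T n).Additive]

lemma isLocalObj_shift {S : Set ℤ} {E : T} (h : IsLocalObj S E) (m : ℤ) :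
    IsLocalObj S (E⟦m⟧) := by
  intro n hn
  have h1 : (n • 𝟙 (E⟦m⟧)) = (shiftFunctor T m).map (n • 𝟙 E) := by
    rw [Functor.map_zsmul, CategoryTheory.Functor.map_id]
  rw [h1]
  have := h n hn
  infer_instance

lemma smul_bij_of_local {S : Set ℤ} {E' : T} (h : IsLocalObj S E') {s : ℤ}
    (hs : s = 1 ∨ s ∈ S) (X : T) : Function.Bijective (fun x : X ⟶ E' => s • x) := by
  rcases hs with rfl | hs
  · have : (fun x : X ⟶ E' => (1 : ℤ) • x) = id := by funext x; simp
    rw [this]; exact Function.bijective_id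
  · have := h s hs
    have heq : (fun x : X ⟶ E' => s • x) = fun x => x ≫ (s • 𝟙 E') := by
      funext x; rw [Preadditive.comp_zsmul, Category.comp_id]
    rw [heq]
    exact postcomp_iso_bij _

end Shift

/-- The natural `ℕ`-indexed "canonical map into hom of coproduct" -/
noncomputable def homκ (g' E₀ B : T) (j : ℕ → (E₀ ⟶ B)) : (⨁ _ : ℕ, (g' ⟶ E₀)) →+ (g' ⟶ B) :=
  toAddMonoid fun n => postcompHom g' (j n)

lemma homκ_of (g' E₀ B : T) (j : ℕ → (E₀ ⟶ B)) (n : ℕ) (a : g' ⟶ E₀) :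
    homκ g' E₀ B j (of (fun _ : ℕ => (g' ⟶ E₀)) n a) = a ≫ j n := by
  simp [homκ, toAddMonoid_of, postcompHom_apply]

section Coprod

variable [HasCoproducts.{v} T]

noncomputable def reindex (M : Type*) [AddCommMonoid M] :
    (⨁ _ : ℕ, M) →+ ⨁ _ : ULift.{v} ℕ, M :=
  toAddMonoid fun n => of (fun _ : ULift.{v} ℕ => M) (ULift.up n)

noncomputable def reindex' (M : Type*) [AddCommMonoid M] :
    (⨁ _ : ULift.{v} ℕ, M) →+ ⨁ _ : ℕ, M :=
  toAddMonoid fun i => of (fun _ : ℕ => M) i.down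

lemma reindex_bij (M : Type*) [AddCommMonoid M] : Function.Bijective (reindex.{v} M) := by
  have h1 : (reindex'.{v} M).comp (reindex.{v} M) = AddMonoidHom.id _ := by
    apply addHom_ext
    intro n a
    simp [reindex, reindex', toAddMonoid_of]
  have h2 : (reindex.{v} M).comp (reindex'.{v} M) = AddMonoidHom.id _ := by
    apply addHom_ext
    intro i a
    cases i
    simp [reindex, reindex', toAddMonoid_of]
  rw [Function.bijective_iff_has_inverse]
  exact ⟨reindex' M, fun x => DFunLike.congr_fun h1 x, fun x => DFunLike.congr_fun h2 x⟩

def Cpt (g : T) : Prop :=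
  ∀ (X : ULift.{v} ℕ → T), Function.Bijective
    (toAddMonoid (fun i => postcompHom g (Sigma.ι X i)) : (⨁ i, (g ⟶ X i)) →+ (g ⟶ ∐ X))

lemma cpt_of_isCompact {g : T} (h : IsCompactObj g) : Cpt.{v} g := fun X => h _ X


lemma cpt_const {g : T} (h : Cpt.{v} g) (E : T) :
    Function.Bijective (homκ g E (∐ fun _ : ULift.{v} ℕ => E)
      (fun n => Sigma.ι (fun _ : ULift.{v} ℕ => E) (ULift.up n))) := by
  have hco : homκ g E (∐ fun _ : ULift.{v} ℕ => E)
        (fun n => Sigma.ι (fun _ : ULift.{v} ℕ => E) (ULift.up n)) =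
      (toAddMonoid (fun i => postcompHom g (Sigma.ι (fun _ : ULift.{v} ℕ => E) i))).comp
        (reindex.{v} (g ⟶ E)) := by
    apply addHom_ext
    intro n a
    simp [homκ, reindex, toAddMonoid_of]
  rw [hco]
  exact (h _).comp (reindex_bij _)

end Coprod

end Cat


section CatShift

variable [Preadditive T] [HasShift T ℤ] [∀ n : ℤ, (shiftFunctor T n).Additive] [HasCoproducts.{v} T]

lemma cpt_shift {g : T} (h : Cpt.{v} g) (m : ℤ) : Cpt.{v} (g⟦m⟧) := by
  intro X
  haveI h5 : ((shiftEquiv T m).functor).Additive := (inferInstance : (shiftFunctor T m).Additive)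
  haveI h6 : ((shiftEquiv T m).inverse).Additive := (inferInstance : (shiftFunctor T (-m)).Additive)
  set adj := (shiftEquiv T m).toAdjunction with hadj
  have hEadd : ∀ (Y : T) (x y : g⟦m⟧ ⟶ Y),
      adj.homEquiv g Y (x + y) = adj.homEquiv g Y x + adj.homEquiv g Y y := by
    intro Y x y
    exact adj.homAddEquiv_add g Y x y
  have hEsadd : ∀ (Y : T) (x y : g ⟶ (Y⟦(-m)⟧)),
      (adj.homEquiv g Y).symm (x + y) = (adj.homEquiv g Y).symm x + (adj.homEquiv g Y).symm y := by
    intro Y x y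
    exact adj.homAddEquiv_symm_add g Y x y
  set e₁ : (⨁ i : ULift.{v} ℕ, (g⟦m⟧ ⟶ X i)) →+ ⨁ i : ULift.{v} ℕ, (g ⟶ ((X i)⟦(-m)⟧)) :=
    toAddMonoid (fun i => (of (fun i : ULift.{v} ℕ => (g ⟶ ((X i)⟦(-m)⟧))) i).comp
      (AddMonoidHom.mk' (fun x => adj.homEquiv g (X i) x) (hEadd (X i)))) with he₁def
  set e₂ : (⨁ i : ULift.{v} ℕ, (g ⟶ ((X i)⟦(-m)⟧))) →+ ⨁ i : ULift.{v} ℕ, (g⟦m⟧ ⟶ X i) :=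
    toAddMonoid (fun i => (of (fun i : ULift.{v} ℕ => (g⟦m⟧ ⟶ X i)) i).comp
      (AddMonoidHom.mk' (fun x => (adj.homEquiv g (X i)).symm x) (hEsadd (X i)))) with he₂def
  have he₁bij : Function.Bijective e₁ := by
    rw [Function.bijective_iff_has_inverse]
    refine ⟨e₂, fun x => ?_, fun x => ?_⟩
    · refine DFunLike.congr_fun (?_ : e₂.comp e₁ = AddMonoidHom.id _) x
      apply addHom_ext
      intro i a
      simp [he₁def, he₂def, toAddMonoid_of]
      exact congrArg _ (Equiv.symm_apply_apply _ a)
    · refine DFunLike.congr_fun (?_ : e₁.comp e₂ = AddMonoidHom.id _) x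
      apply addHom_ext
      intro i a
      simp [he₁def, he₂def, toAddMonoid_of]
      exact congrArg _ (Equiv.apply_symm_apply _ a)
  set e₄ : (g ⟶ ((∐ X)⟦(-m)⟧)) →+ (g⟦m⟧ ⟶ ∐ X) :=
    AddMonoidHom.mk' (fun y => (adj.homEquiv g (∐ X)).symm y) (hEsadd (∐ X)) with he₄def
  have he₄bij : Function.Bijective e₄ := (adj.homEquiv g (∐ X)).symm.bijective
  have key : (toAddMonoid fun i => postcompHom (g⟦m⟧) (Sigma.ι X i)) =
      e₄.comp ((postcompHom g (sigmaComparison (shiftFunctor T (-m)) X)).comp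
        ((toAddMonoid fun i => postcompHom g (Sigma.ι (fun b => ((X b)⟦(-m)⟧)) i)).comp e₁)) := by
    apply addHom_ext
    intro i a
    simp only [AddMonoidHom.comp_apply, toAddMonoid_of, postcompHom_apply, he₁def, he₄def,
      AddMonoidHom.mk'_apply]
    have hnat : (adj.homEquiv g (∐ X)) (a ≫ Sigma.ι X i) =
        (adj.homEquiv g (X i)) a ≫ (shiftFunctor T (-m)).map (Sigma.ι X i) :=
      adj.homEquiv_naturality_right a (Sigma.ι X i)
    rw [Category.assoc, ι_comp_sigmaComparison]
    exact ((adj.homEquiv g (∐ X)).symm_apply_apply _).symm.trans (congrArg (adj.homEquiv g (∐ X)).symm hnat)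
  rw [key]
  exact he₄bij.comp ((postcomp_iso_bij _).comp ((h _).comp he₁bij))


end CatShift

section Cov

variable [Preadditive T]

lemma covariant_facts (g' E₀ B : T) (j : ℕ → (E₀ ⟶ B)) (e : ℕ → ℤ)
    (hκ : Function.Bijective (homκ g' E₀ B j))
    (tB : B ⟶ B) (ht : ∀ n, j n ≫ tB = e n • j (n + 1)) :
    (∀ x : g' ⟶ B, x ≫ (𝟙 B - tB) = 0 → x = 0) ∧
    (∀ s : ℤ, (∀ N : ℕ, ∃ k, N ≤ k ∧ e k = s) →
      ((∀ b : g' ⟶ B, ∃ a c, b = s • a + c ≫ (𝟙 B - tB)) ∧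
       (∀ (a c : g' ⟶ B), s • a = c ≫ (𝟙 B - tB) → ∃ c', a = c' ≫ (𝟙 B - tB)))) := by
  have hint : ∀ w, homκ g' E₀ B j (Phi e w) = homκ g' E₀ B j w ≫ (𝟙 B - tB) := by
    intro w
    refine DFunLike.congr_fun
      (?_ : (homκ g' E₀ B j).comp (Phi e) = (postcompHom g' (𝟙 B - tB)).comp (homκ g' E₀ B j)) w
    apply addHom_ext
    intro n a
    simp only [AddMonoidHom.comp_apply, Phi_of, map_sub, homκ_of, postcompHom_apply,
      Preadditive.comp_sub, Category.comp_id, Category.assoc, ht n, Preadditive.comp_zsmul,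
      Preadditive.zsmul_comp]
  have hsurj := hκ.2
  have hinj := hκ.1
  constructor
  · intro x hx
    obtain ⟨w, rfl⟩ := hsurj x
    have h0 : homκ g' E₀ B j (Phi e w) = 0 := by rw [hint]; exact hx
    have h1 : Phi e w = 0 := hinj (by rw [h0, map_zero])
    have hw : w = 0 := Phi_inj e (by rw [h1, map_zero])
    rw [hw, map_zero]
  · intro s hocc
    constructor
    · intro b
      obtain ⟨w, rfl⟩ := hsurj b
      obtain ⟨a, c, hac⟩ := alg_surj e hocc w
      refine ⟨homκ g' E₀ B j a, homκ g' E₀ B j c, ?_⟩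
      rw [hac, map_add, map_zsmul, hint]
    · intro a c hac
      obtain ⟨w, rfl⟩ := hsurj a
      obtain ⟨u, rfl⟩ := hsurj c
      have h1 : homκ g' E₀ B j (s • w) = homκ g' E₀ B j (Phi e u) := by
        rw [map_zsmul, hint]; exact hac
      obtain ⟨c', hc'⟩ := alg_inj e hocc w u (hinj h1)
      exact ⟨homκ g' E₀ B j c', by rw [hc', hint]⟩

lemma contravariant_facts (E₀ B : T) (j : ℕ → (E₀ ⟶ B)) (e : ℕ → ℤ)
    (hdesc : ∀ (W : T) (gg : ℕ → (E₀ ⟶ W)), ∃ f : B ⟶ W, ∀ n, j n ≫ f = gg n)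
    (hext : ∀ (W : T) (f f' : B ⟶ W), (∀ n, j n ≫ f = j n ≫ f') → f = f')
    (tB : B ⟶ B) (ht : ∀ n, j n ≫ tB = e n • j (n + 1))
    (W : T) (hbij : ∀ n, Function.Bijective (fun x : E₀ ⟶ W => e n • x)) :
    (∀ θ : E₀ ⟶ W, ∃ f : B ⟶ W, (𝟙 B - tB) ≫ f = 0 ∧ j 0 ≫ f = θ) ∧
    (∀ ξ : B ⟶ W, ∃ ξ', ξ = (𝟙 B - tB) ≫ ξ') ∧
    (∀ f : B ⟶ W, (𝟙 B - tB) ≫ f = 0 → j 0 ≫ f = 0 → f = 0) := by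
  have hcomp : ∀ (f : B ⟶ W) (n : ℕ),
      j n ≫ ((𝟙 B - tB) ≫ f) = j n ≫ f - e n • (j (n + 1) ≫ f) := by
    intro f n
    rw [← Category.assoc, Preadditive.comp_sub, Category.comp_id, ht n, Preadditive.sub_comp,
      Preadditive.zsmul_comp]
  refine ⟨?_, ?_, ?_⟩
  · intro θ
    set F : ℕ → (E₀ ⟶ W) :=
      fun n => Nat.rec θ (fun n Fn => (Equiv.ofBijective _ (hbij n)).symm Fn) n with hF
    have hFstep : ∀ n, e n • F (n + 1) = F n := fun n =>
      Equiv.apply_symm_apply (Equiv.ofBijective _ (hbij n)) (F n)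
    obtain ⟨f, hf⟩ := hdesc W F
    refine ⟨f, ?_, (hf 0).trans rfl⟩
    refine hext W _ 0 fun n => ?_
    rw [hcomp, hf n, hf (n+1), Limits.comp_zero, hFstep n, sub_self]
  · intro ξ
    set Gn : ℕ → (E₀ ⟶ W) := fun n => j n ≫ ξ with hG
    set H : ℕ → (E₀ ⟶ W) :=
      fun n => Nat.rec 0 (fun n Hn => (Equiv.ofBijective _ (hbij n)).symm (Hn - Gn n)) n with hH
    have hHstep : ∀ n, e n • H (n + 1) = H n - Gn n := fun n =>
      Equiv.apply_symm_apply (Equiv.ofBijective _ (hbij n)) _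
    obtain ⟨ξ', hξ'⟩ := hdesc W H
    refine ⟨ξ', hext W _ _ fun n => ?_⟩
    rw [hcomp, hξ' n, hξ' (n+1), hHstep n, sub_sub_cancel]
  · intro f h1 h2
    have hstep : ∀ n, j n ≫ f = 0 := by
      intro n
      induction n with
      | zero => exact h2
      | succ n ih =>
        have h3 := hcomp f n
        rw [h1, Limits.comp_zero, ih, zero_sub] at h3
        have h4 : e n • (j (n + 1) ≫ f) = e n • (0 : E₀ ⟶ W) := by
          rw [smul_zero, ← neg_eq_zero, h3]
        exact (hbij n).1 h4
    exact hext W f 0 fun n => by rw [hstep n, Limits.comp_zero]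

end Cov

section Main

variable [Preadditive T] [HasZeroObject T] [HasShift T ℤ]
  [∀ n : ℤ, (shiftFunctor T n).Additive] [Pretriangulated T] [HasCoproducts.{v} T]

lemma exists_seq (S : Set ℤ) : ∃ e : ℕ → ℤ, (∀ n, e n = 1 ∨ e n ∈ S) ∧
    (∀ s : ℤ, (s = 1 ∨ s ∈ S) → ∀ N : ℕ, ∃ k, N ≤ k ∧ e k = s) := by
  obtain ⟨f, hf⟩ := (Set.to_countable (insert (1:ℤ) S)).exists_eq_range ⟨1, Set.mem_insert _ _⟩
  refine ⟨fun n => f (Nat.unpair n).2, ?_, ?_⟩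
  · intro n
    have h1 : f (Nat.unpair n).2 ∈ insert (1:ℤ) S := by rw [hf]; exact Set.mem_range_self _
    simpa [Set.mem_insert_iff] using h1
  · intro s hs N
    have hmem : s ∈ insert (1:ℤ) S := by
      rcases hs with rfl | hs
      exacts [Set.mem_insert _ _, Set.mem_insert_of_mem _ hs]
    rw [hf] at hmem
    obtain ⟨m, hm⟩ := hmem
    refine ⟨Nat.pair N m, Nat.left_le_pair N m, ?_⟩
    show f (Nat.unpair (Nat.pair N m)).2 = s
    rw [Nat.unpair_pair]
    exact hm

lemma localization_exists (S : Set ℤ) (G₀ : Set T) (hcpt : ∀ g ∈ G₀, IsCompactObj g)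
    (hgen : ∀ E : T, (∀ g ∈ G₀, ∀ n : ℤ, ∀ φ : g⟦n⟧ ⟶ E, φ = 0) → IsZero E) (E : T) :
    ∃ (L : T) (η : E ⟶ L), IsLocalObj S L ∧
      ∀ E' : T, IsLocalObj S E' → Function.Bijective (fun χ : L ⟶ E' => η ≫ χ) := by
  classical
  obtain ⟨e, he1, hocc⟩ := exists_seq S
  set X : ULift.{v} ℕ → T := fun _ => E with hX
  set j : ℕ → (E ⟶ ∐ X) := fun n => Sigma.ι X (ULift.up n) with hj
  set t : (∐ X) ⟶ (∐ X) := Sigma.desc (fun i => e i.down • j (i.down + 1)) with htdef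
  have ht : ∀ n, j n ≫ t = e n • j (n + 1) := fun n => by
    simp only [hj, htdef, colimit.ι_desc]
    rfl
  obtain ⟨L, π, δ, hT⟩ := Pretriangulated.distinguished_cocone_triangle (𝟙 (∐ X) - t)
  set η : E ⟶ L := j 0 ≫ π with hη
  have hdesc : ∀ (W : T) (gg : ℕ → (E ⟶ W)), ∃ f : (∐ X) ⟶ W, ∀ n, j n ≫ f = gg n := by
    intro W gg
    exact ⟨Sigma.desc (fun i => gg i.down), fun n => by simp [hj]⟩
  have hext : ∀ (W : T) (f f' : (∐ X) ⟶ W), (∀ n, j n ≫ f = j n ≫ f') → f = f' := by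
    intro W f f' h
    apply Sigma.hom_ext
    rintro ⟨n⟩
    exact h n
  set σ : (∐ fun b => (X b)⟦(1:ℤ)⟧) ⟶ (∐ X)⟦(1:ℤ)⟧ := sigmaComparison (shiftFunctor T (1:ℤ)) X
    with hσ
  set j₁ : ℕ → (E⟦(1:ℤ)⟧ ⟶ (∐ X)⟦(1:ℤ)⟧) := fun n => (j n)⟦(1:ℤ)⟧' with hj₁
  have hj₁σ : ∀ n, Sigma.ι (fun b => (X b)⟦(1:ℤ)⟧) (ULift.up n) ≫ σ = j₁ n := fun n =>
    ι_comp_sigmaComparison _ _ _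
  have ht₁ : ∀ n, j₁ n ≫ (t⟦(1:ℤ)⟧') = e n • j₁ (n + 1) := fun n => by
    rw [hj₁]
    rw [← Functor.map_comp, ht n, Functor.map_zsmul]
  have hφ₁ : 𝟙 ((∐ X)⟦(1:ℤ)⟧) - t⟦(1:ℤ)⟧' = (𝟙 (∐ X) - t)⟦(1:ℤ)⟧' := by
    rw [Functor.map_sub, CategoryTheory.Functor.map_id]
  have hdesc₁ : ∀ (W : T) (gg : ℕ → (E⟦(1:ℤ)⟧ ⟶ W)),
      ∃ f : ((∐ X)⟦(1:ℤ)⟧) ⟶ W, ∀ n, j₁ n ≫ f = gg n := by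
    intro W gg
    refine ⟨inv σ ≫ Sigma.desc (fun i => gg i.down), fun n => ?_⟩
    rw [← hj₁σ n, Category.assoc, IsIso.hom_inv_id_assoc]
    simp
  have hext₁ : ∀ (W : T) (f f' : ((∐ X)⟦(1:ℤ)⟧) ⟶ W), (∀ n, j₁ n ≫ f = j₁ n ≫ f') → f = f' := by
    intro W f f' h
    rw [← cancel_epi σ]
    apply Sigma.hom_ext
    rintro ⟨n⟩
    rw [← Category.assoc, ← Category.assoc, hj₁σ n]
    exact h n
  -- universal property
  have huniv : ∀ E' : T, IsLocalObj S E' → Function.Bijective (fun χ : L ⟶ E' => η ≫ χ) := by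
    intro E' hE'
    have hbijE : ∀ (Xo : T) (n : ℕ), Function.Bijective (fun x : Xo ⟶ E' => e n • x) :=
      fun Xo n => smul_bij_of_local hE' (he1 n) Xo
    obtain ⟨hpa, hpb, hpc⟩ := contravariant_facts E (∐ X) j e hdesc hext t ht E' (hbijE E)
    obtain ⟨hpa₁, hpb₁, hpc₁⟩ := contravariant_facts (E⟦(1:ℤ)⟧) ((∐ X)⟦(1:ℤ)⟧) j₁ e hdesc₁
      hext₁ (t⟦(1:ℤ)⟧') ht₁ E' (hbijE _)
    constructor
    · intro χ χ' hχχ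
      have hψ0 : η ≫ (χ - χ') = 0 := by
        rw [Preadditive.comp_sub]
        rw [sub_eq_zero]
        exact hχχ
      have hπψ : π ≫ (χ - χ') = 0 := by
        apply hpc
        · rw [← Category.assoc]
          have h12 : (𝟙 (∐ X) - t) ≫ π = 0 := comp_distTriang_mor_zero₁₂ _ hT
          rw [h12, Limits.zero_comp]
        · rw [← Category.assoc]
          exact hψ0
      obtain ⟨ξ, hξ⟩ := Pretriangulated.Triangle.yoneda_exact₂ _ (rot_of_distTriang _ hT)
        (χ - χ') hπψ
      have hξ2 : χ - χ' = δ ≫ ξ := hξ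
      obtain ⟨ξ', hξ'⟩ := hpb₁ ξ
      have hδφ : δ ≫ (𝟙 (∐ X) - t)⟦(1:ℤ)⟧' = 0 := comp_distTriang_mor_zero₃₁ _ hT
      have hzz : χ - χ' = 0 := by
        rw [hξ2, hξ', hφ₁, ← Category.assoc, hδφ, Limits.zero_comp]
      exact sub_eq_zero.1 hzz
    · intro θ
      obtain ⟨f, hf0, hf⟩ := hpa θ
      obtain ⟨χ, hχ⟩ := Pretriangulated.Triangle.yoneda_exact₂ _ hT f hf0
      have hχ2 : f = π ≫ χ := hχ
      refine ⟨χ, ?_⟩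
      show η ≫ χ = θ
      rw [hη]
      erw [Category.assoc]
      rw [← hχ2, hf]
  -- locality
  have hLbij : ∀ s ∈ S, ∀ g ∈ G₀, ∀ m : ℤ,
      Function.Bijective (fun x : g⟦m⟧ ⟶ L => s • x) := by
    intro s hs g hg m
    have hCpt : Cpt.{v} (g⟦m⟧) := cpt_shift (cpt_of_isCompact (hcpt g hg)) m
    have hκD : Function.Bijective (homκ (g⟦m⟧) E (∐ X) j) := cpt_const hCpt E
    have hκD₁ : Function.Bijective (homκ (g⟦m⟧) (E⟦(1:ℤ)⟧) ((∐ X)⟦(1:ℤ)⟧) j₁) := by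
      have hrew : homκ (g⟦m⟧) (E⟦(1:ℤ)⟧) ((∐ X)⟦(1:ℤ)⟧) j₁ =
          (postcompHom (g⟦m⟧) σ).comp (homκ (g⟦m⟧) (E⟦(1:ℤ)⟧) (∐ fun b => (X b)⟦(1:ℤ)⟧)
            (fun n => Sigma.ι (fun b => (X b)⟦(1:ℤ)⟧) (ULift.up n))) := by
        apply addHom_ext
        intro n a
        rw [AddMonoidHom.comp_apply, homκ_of, homκ_of, postcompHom_apply, Category.assoc,
          hj₁σ n]
      rw [hrew]
      exact (postcomp_iso_bij σ).comp (cpt_const hCpt (E⟦(1:ℤ)⟧))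
    obtain ⟨hcaD, hcbcD⟩ := covariant_facts (g⟦m⟧) E (∐ X) j e hκD t ht
    obtain ⟨hcaD₁, -⟩ := covariant_facts (g⟦m⟧) (E⟦(1:ℤ)⟧) ((∐ X)⟦(1:ℤ)⟧) j₁ e hκD₁
      (t⟦(1:ℤ)⟧') ht₁
    obtain ⟨hsurj', hinj'⟩ := hcbcD s (hocc s (Or.inr hs))
    have hfact : ∀ y : g⟦m⟧ ⟶ L, ∃ x, y = x ≫ π := by
      intro y
      have hδφ : δ ≫ (𝟙 (∐ X) - t)⟦(1:ℤ)⟧' = 0 := comp_distTriang_mor_zero₃₁ _ hT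
      have h1 : (y ≫ δ) ≫ (𝟙 ((∐ X)⟦(1:ℤ)⟧) - t⟦(1:ℤ)⟧') = 0 := by
        rw [hφ₁, Category.assoc, hδφ, Limits.comp_zero]
      have h2 : y ≫ δ = 0 := hcaD₁ _ h1
      obtain ⟨x, hx⟩ := Pretriangulated.Triangle.coyoneda_exact₂ _ (rot_of_distTriang _ hT) y h2
      exact ⟨x, hx⟩
    constructor
    · intro y y' hyy
      have hz : s • (y - y') = 0 := by
        rw [smul_sub]
        rw [sub_eq_zero]
        exact hyy
      obtain ⟨x, hx⟩ := hfact (y - y')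
      have h3 : (s • x) ≫ π = 0 := by
        rw [Preadditive.zsmul_comp, ← hx, hz]
      obtain ⟨c, hc⟩ := Pretriangulated.Triangle.coyoneda_exact₂ _ hT (s • x) h3
      obtain ⟨c', hc'⟩ := hinj' x c hc
      have : y - y' = 0 := by
        rw [hx, hc', Category.assoc]
        have h12 : (𝟙 (∐ X) - t) ≫ π = 0 := comp_distTriang_mor_zero₁₂ _ hT
        rw [h12, Limits.comp_zero]
      exact sub_eq_zero.1 this
    · intro y
      obtain ⟨x, hx⟩ := hfact y
      obtain ⟨a, c, hac⟩ := hsurj' x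
      refine ⟨a ≫ π, ?_⟩
      show s • (a ≫ π) = y
      have h12 : (𝟙 (∐ X) - t) ≫ π = 0 := comp_distTriang_mor_zero₁₂ _ hT
      rw [hx, hac, Preadditive.add_comp, Category.assoc, h12, Limits.comp_zero, add_zero,
        Preadditive.zsmul_comp]
  have hLloc : IsLocalObj S L := by
    intro s hs
    obtain ⟨Cs, u, vmor, hTs⟩ := Pretriangulated.distinguished_cocone_triangle (s • 𝟙 L)
    have hz : IsZero Cs := by
      apply hgen
      intro g hg m ψ
      have hbijL := hLbij s hs g hg m
      -- injectivity of s • on Hom(g⟦m⟧, L⟦1⟧), transported from Hom(g⟦m-1⟧, L)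
      have hinj1 : Function.Injective (fun x : g⟦m⟧ ⟶ L⟦(1:ℤ)⟧ => s • x) := by
        have hsum : (-1 : ℤ) + 1 = 0 := by omega
        haveI : ((shiftEquiv' T (-1:ℤ) (1:ℤ) hsum).inverse).Additive :=
          (inferInstance : (shiftFunctor T (1:ℤ)).Additive)
        haveI : ((shiftEquiv' T (-1:ℤ) (1:ℤ) hsum).functor).Additive :=
          (inferInstance : (shiftFunctor T (-1:ℤ)).Additive)
        set adj' := (shiftEquiv' T (-1:ℤ) (1:ℤ) hsum).toAdjunction with hadj'
        set β : g⟦m - 1⟧ ≅ (g⟦m⟧)⟦(-1:ℤ)⟧ :=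
          (shiftFunctorAdd' T m (-1) (m - 1) (by omega)).app g with hβ
        set Q : (g⟦m - 1⟧ ⟶ L) ≃ (g⟦m⟧ ⟶ L⟦(1:ℤ)⟧) :=
          (Equiv.mk (fun x : g⟦m - 1⟧ ⟶ L => adj'.homEquiv _ _ (β.inv ≫ x))
            (fun y => β.hom ≫ (adj'.homEquiv _ _).symm y)
            (fun x => by simp) (fun y => (congrArg (adj'.homEquiv _ _) (β.inv_hom_id_assoc _)).trans
              (Equiv.apply_symm_apply _ y))) with hQ
        have hQs : ∀ (c : ℤ) (y : g⟦m - 1⟧ ⟶ L), Q (c • y) = c • Q y := by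
          intro c y
          exact (congrArg (adj'.homEquiv _ _) (Preadditive.comp_zsmul _ _ _)).trans
            (map_zsmul (adj'.homAddEquiv _ _) c _)
        exact (bij_transport Q (fun x => s • x) (fun x => s • x) (fun x => hQs s x)
          (hLbij s hs g hg (m - 1))).1
      have hvz : (s • 𝟙 L)⟦(1:ℤ)⟧' = s • 𝟙 (L⟦(1:ℤ)⟧) := by
        rw [Functor.map_zsmul, CategoryTheory.Functor.map_id]
      have h31 := comp_distTriang_mor_zero₃₁ _ hTs
      have h31' : vmor ≫ (shiftFunctor T (1:ℤ)).map (s • 𝟙 L) = 0 := h31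
      have h1 : s • (ψ ≫ vmor) = s • (0 : g⟦m⟧ ⟶ L⟦(1:ℤ)⟧) := by
        rw [smul_zero]
        have hq2 : ψ ≫ vmor ≫ ((s • 𝟙 L)⟦(1:ℤ)⟧') = 0 := by
          rw [h31', Limits.comp_zero]
        rw [hvz] at hq2
        rw [← hq2, Preadditive.comp_zsmul, Preadditive.comp_zsmul, Category.comp_id]
      have h2 : ψ ≫ vmor = 0 := hinj1 h1
      obtain ⟨χ, hχ⟩ := Pretriangulated.Triangle.coyoneda_exact₃ _ hTs ψ h2
      have hχ2 : ψ = χ ≫ u := hχ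
      obtain ⟨χ', hχ'⟩ := hbijL.2 χ
      have h12 : (s • 𝟙 L) ≫ u = 0 := comp_distTriang_mor_zero₁₂ _ hTs
      rw [hχ2, ← hχ']
      show (s • χ') ≫ u = 0
      have hsu : s • u = (s • 𝟙 L) ≫ u := by rw [Preadditive.zsmul_comp, Category.id_comp]
      rw [Preadditive.zsmul_comp, ← Preadditive.comp_zsmul, hsu, h12, Limits.comp_zero]
    exact (Pretriangulated.Triangle.isZero₃_iff_isIso₁ _ hTs).1 hz
  exact ⟨L, η, hLloc, huniv⟩

lemma acyclic_exists (S : Set ℤ) (E : T) (L : T) (η : E ⟶ L) (hLloc : IsLocalObj S L)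
    (hLuniv : ∀ E' : T, IsLocalObj S E' → Function.Bijective (fun χ : L ⟶ E' => η ≫ χ)) :
    ∃ (Cb : T) (ε : Cb ⟶ E), (∀ E' : T, IsLocalObj S E' → ∀ φc : Cb ⟶ E', φc = 0) ∧
      ∀ F : T, (∀ E' : T, IsLocalObj S E' → ∀ φf : F ⟶ E', φf = 0) →
        Function.Bijective (fun χ : F ⟶ Cb => χ ≫ ε) := by
  obtain ⟨Z, p, q, hT2⟩ := Pretriangulated.distinguished_cocone_triangle η
  set Tinv := (Triangle.mk η p q).invRotate with hTinvdef
  have hTinv : Tinv ∈ distTriang T := inv_rot_of_distTriang _ hT2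
  set Tinv2 := Tinv.invRotate with hTinv2def
  have hTinv2 : Tinv2 ∈ distTriang T := inv_rot_of_distTriang _ hTinv
  refine ⟨Tinv.obj₁, Tinv.mor₁, ?_, ?_⟩
  · intro E' hE' φc
    have hsum : (-1 : ℤ) + 1 = 0 := by omega
    haveI : ((shiftEquiv' T (-1:ℤ) (1:ℤ) hsum).inverse).Additive :=
      (inferInstance : (shiftFunctor T (1:ℤ)).Additive)
    haveI : ((shiftEquiv' T (-1:ℤ) (1:ℤ) hsum).functor).Additive :=
      (inferInstance : (shiftFunctor T (-1:ℤ)).Additive)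
    set adj' := (shiftEquiv' T (-1:ℤ) (1:ℤ) hsum).toAdjunction with hadj'
    set θ0 : ((Tinv.obj₁)⟦(1:ℤ)⟧)⟦(-1:ℤ)⟧ ⟶ E' :=
      (shiftEquiv T (1:ℤ)).unitIso.inv.app Tinv.obj₁ ≫ φc with hθ0
    have hθ : Tinv.mor₃ ≫ adj'.homEquiv ((Tinv.obj₁)⟦(1:ℤ)⟧) E' θ0 = 0 := by
      apply (hLuniv (E'⟦(1:ℤ)⟧) (isLocalObj_shift hE' 1)).1
      show η ≫ Tinv.mor₃ ≫ adj'.homEquiv ((Tinv.obj₁)⟦(1:ℤ)⟧) E' θ0 = η ≫ 0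
      rw [Limits.comp_zero]
      erw [← Category.assoc]
      have h23 : η ≫ Tinv.mor₃ = 0 := comp_distTriang_mor_zero₂₃ _ hTinv
      rw [h23, Limits.zero_comp]
    have hx : (Tinv.mor₃)⟦(-1:ℤ)⟧' ≫ θ0 = 0 := by
      apply (adj'.homEquiv Tinv.obj₃ E').injective
      have hzero : adj'.homEquiv Tinv.obj₃ E' 0 = 0 := by
        rw [Adjunction.homEquiv_apply, Functor.map_zero, Limits.comp_zero]
      exact (adj'.homEquiv_naturality_left Tinv.mor₃ θ0).trans (hθ.trans hzero.symm)
    have hm1 : Tinv2.mor₁ ≫ φc = 0 := by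
      have h5 : Tinv2.mor₁ =
          -(Tinv.mor₃)⟦(-1:ℤ)⟧' ≫ (shiftEquiv T (1:ℤ)).unitIso.inv.app Tinv.obj₁ := rfl
      rw [h5]
      exact (Preadditive.neg_comp _ _).trans
        ((congrArg Neg.neg ((Category.assoc _ _ _).trans hx)).trans neg_zero)
    obtain ⟨ψ, hψ⟩ := Pretriangulated.Triangle.yoneda_exact₂ _ hTinv2 φc hm1
    have hψ2 : φc = Tinv.mor₁ ≫ ψ := hψ
    obtain ⟨χ, hχ⟩ := (hLuniv E' hE').2 ψ
    have hχ2 : η ≫ χ = ψ := hχ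
    have h12 : Tinv.mor₁ ≫ Tinv.mor₂ = 0 := comp_distTriang_mor_zero₁₂ _ hTinv
    have h12' : Tinv.mor₁ ≫ η = 0 := h12
    rw [hψ2, ← hχ2]
    erw [← Category.assoc]
    rw [h12', Limits.zero_comp]
  · intro F hF
    constructor
    · intro χ χ' h
      have hz : (χ - χ') ≫ Tinv.mor₁ = 0 := by
        rw [Preadditive.sub_comp, sub_eq_zero]
        exact h
      obtain ⟨z, hzz⟩ := Pretriangulated.Triangle.coyoneda_exact₂ _ hTinv2 (χ - χ') hz
      have hzzero : z = 0 := hF (L⟦(-1:ℤ)⟧) (isLocalObj_shift hLloc (-1)) z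
      rw [hzzero, Limits.zero_comp] at hzz
      exact sub_eq_zero.1 hzz
    · intro x
      have h1 : x ≫ Tinv.mor₂ = 0 := hF L hLloc (x ≫ η)
      obtain ⟨χ, hχ⟩ := Pretriangulated.Triangle.coyoneda_exact₂ _ hTinv x h1
      exact ⟨χ, hχ.symm⟩

end Main


end Stmt14Aux

/-- In a compactly generated triangulated category with small coproducts and `S ⊆ ℤ` a
multiplicatively closed set of integers: (a) the inclusion of the full subcategory of
`ℤ[S⁻¹]`-local objects admits a left adjoint, and (b) the inclusion of the full subcategory of
objects `F` with `Hom(F, E) = 0` for every `ℤ[S⁻¹]`-local `E` admits a right adjoint. -/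
theorem stmt14 [Preadditive T] [HasZeroObject T] [HasShift T ℤ]
    [∀ n : ℤ, (shiftFunctor T n).Additive] [Pretriangulated T] [IsTriangulated T]
    [HasCoproducts.{v} T]
    (G₀ : Set T) (hcpt : ∀ g ∈ G₀, IsCompactObj g)
    (hgen : ∀ E : T, (∀ g ∈ G₀, ∀ n : ℤ, ∀ φ : g⟦n⟧ ⟶ E, φ = 0) → IsZero E)
    (S : Set ℤ) (hS : ∀ a ∈ S, ∀ b ∈ S, a * b ∈ S) :
    (ObjectProperty.ι (IsLocalObj (T := T) S)).IsRightAdjoint ∧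
    (ObjectProperty.ι
      (fun F : T => ∀ E : T, IsLocalObj S E → ∀ φ : F ⟶ E, φ = 0)).IsLeftAdjoint := by
  have hex := Stmt14Aux.localization_exists (T := T) S G₀ hcpt hgen
  choose L η hLloc hLuniv using hex
  have hay := fun E => Stmt14Aux.acyclic_exists (T := T) S E (L E) (η E) (hLloc E) (hLuniv E)
  choose Cb ε hCacy hCuniv using hay
  constructor
  · let e : ∀ (Xo : T) (Y : ObjectProperty.FullSubcategory (IsLocalObj (T := T) S)),
        ((fun Xo : T => (⟨L Xo, hLloc Xo⟩ : ObjectProperty.FullSubcategory (IsLocalObj (T := T) S))) Xo ⟶ Y) ≃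
          (Xo ⟶ (ObjectProperty.ι (IsLocalObj (T := T) S)).obj Y) :=
      fun Xo Y => InducedCategory.homEquiv.trans (Equiv.ofBijective _ (hLuniv Xo Y.obj Y.property))
    have he : ∀ (Xo : T) (Y Y' : ObjectProperty.FullSubcategory (IsLocalObj (T := T) S)) (g : Y ⟶ Y')
        (h : _ ⟶ Y), e Xo Y' (h ≫ g) =
          e Xo Y h ≫ (ObjectProperty.ι (IsLocalObj (T := T) S)).map g :=
      fun Xo Y Y' g h => (Category.assoc (η Xo) h.hom g.hom).symm
    exact (Adjunction.adjunctionOfEquivLeft e he).isRightAdjoint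
  · set P : T → Prop := fun F => ∀ E : T, IsLocalObj S E → ∀ φ : F ⟶ E, φ = 0 with hP
    let e : ∀ (Xo : ObjectProperty.FullSubcategory P) (Y : T),
        ((ObjectProperty.ι P).obj Xo ⟶ Y) ≃
          (Xo ⟶ (⟨Cb Y, hCacy Y⟩ : ObjectProperty.FullSubcategory P)) :=
      fun Xo Y => (Equiv.ofBijective (fun χ : Xo.obj ⟶ Cb Y => χ ≫ ε Y)
        (hCuniv Y Xo.obj Xo.property)).symm.trans
          ⟨fun f => ObjectProperty.homMk f, fun f => f.hom, fun _ => rfl, fun _ => rfl⟩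
    have he : ∀ (X' Xo : ObjectProperty.FullSubcategory P) (Y : T) (f : X' ⟶ Xo)
        (g : (ObjectProperty.ι P).obj Xo ⟶ Y),
        e X' Y ((ObjectProperty.ι P).map f ≫ g) = f ≫ e Xo Y g := by
      intro X' Xo Y f g
      apply ObjectProperty.hom_ext
      apply (Equiv.ofBijective (fun χ : X'.obj ⟶ Cb Y => χ ≫ ε Y)
        (hCuniv Y X'.obj X'.property)).injective
      show (Equiv.ofBijective (fun χ : X'.obj ⟶ Cb Y => χ ≫ ε Y) (hCuniv Y X'.obj X'.property))
          ((Equiv.ofBijective (fun χ : X'.obj ⟶ Cb Y => χ ≫ ε Y)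
            (hCuniv Y X'.obj X'.property)).symm (f.hom ≫ g)) =
        (f.hom ≫ (Equiv.ofBijective (fun χ : Xo.obj ⟶ Cb Y => χ ≫ ε Y)
            (hCuniv Y Xo.obj Xo.property)).symm g) ≫ ε Y
      rw [Equiv.apply_symm_apply]
      have hG : (Equiv.ofBijective (fun χ : Xo.obj ⟶ Cb Y => χ ≫ ε Y)
          (hCuniv Y Xo.obj Xo.property)).symm g ≫ ε Y = g :=
        Equiv.apply_symm_apply (Equiv.ofBijective _ (hCuniv Y Xo.obj Xo.property)) g
      rw [Category.assoc, hG]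
    exact (Adjunction.adjunctionOfEquivRight e he).isLeftAdjoint
end
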